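/- arXiv:2010.04352 — 10 statements merged into one kernel-verified Lean document; each statement's English description precedes it below -/
import Mathlib

section
/- Let φ : ℝ^d → ℝ be differentiable and m-strongly convex in the sense that ⟨∇φ(u) − ∇φ(v), u − v⟩ ≥ m ‖u − v‖² for all u, v ∈ ℝ^d, with m > 0. Let g : ℝ^d → ℝ^d satisfy ‖g(x) − ∇φ(x)‖ ≤ ε_g for all x, with ε_g ≥ 0. Fix x, p ∈ ℝ^d with p ≠ 0 and c₃ > 0. Then any β satisfying β ≥ 2(2 + c₃) ε_g / (m ‖p‖) satisfies the noise control condition ⟨g(x + β p) − g(x), p⟩ ≥ 2(1 + c₃) ε_g ‖p‖. -/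
/-- For an `m`-strongly convex function, any lengthening parameter
`β ≥ 2(2 + c₃) ε_g / (m ‖p‖)` satisfies the noise control condition. -/
theorem strongly_convex_beta_satisfies_noise_control
    {d : ℕ} (φ : EuclideanSpace ℝ (Fin d) → ℝ) (hφ : Differentiable ℝ φ)
    (m : ℝ) (hm : 0 < m)
    (hconv : ∀ u v : EuclideanSpace ℝ (Fin d),
      (inner ℝ (gradient φ u - gradient φ v) (u - v) : ℝ) ≥ m * ‖u - v‖ ^ 2)
    (g : EuclideanSpace ℝ (Fin d) → EuclideanSpace ℝ (Fin d))
    (εg : ℝ) (hεg : 0 ≤ εg)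
    (hg : ∀ x, ‖g x - gradient φ x‖ ≤ εg)
    (x p : EuclideanSpace ℝ (Fin d)) (hp : p ≠ 0) (c₃ : ℝ) (hc₃ : 0 < c₃)
    (β : ℝ) (hβ : β ≥ 2 * (2 + c₃) * εg / (m * ‖p‖)) :
    (inner ℝ (g (x + β • p) - g x) p : ℝ) ≥ 2 * (1 + c₃) * εg * ‖p‖ := by
  have hpn : 0 < ‖p‖ := norm_pos_iff.mpr hp
  have hmp : 0 < m * ‖p‖ := mul_pos hm hpn
  have hnum : 0 ≤ 2 * (2 + c₃) * εg := by positivity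
  have hβ0 : 0 ≤ β := le_trans (div_nonneg hnum hmp.le) hβ
  have hβm : 2 * (2 + c₃) * εg ≤ β * (m * ‖p‖) := by
    rw [← div_le_iff₀ hmp]; exact hβ
  set u := x + β • p with hu
  -- strong convexity gives lower bound on ⟨∇φ u - ∇φ x, p⟩
  have hkey : (inner ℝ (gradient φ u - gradient φ x) p : ℝ) ≥ m * β * ‖p‖ ^ 2 := by
    have h := hconv u x
    have huv : u - x = β • p := by simp [hu, add_sub_cancel_left]
    rw [huv, real_inner_smul_right, norm_smul, mul_pow] at h
    rcases eq_or_lt_of_le hβ0 with h0 | h0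
    · have : (inner ℝ (gradient φ u - gradient φ x) p : ℝ) = 0 ∨ True := Or.inr trivial
      rw [← h0]
      simpa [hu, ← h0] using le_refl (0 : ℝ)
    · have : β * (m * β * ‖p‖ ^ 2) ≤ β * inner ℝ (gradient φ u - gradient φ x) p := by
        calc β * (m * β * ‖p‖ ^ 2) = m * (|β| ^ 2 * ‖p‖ ^ 2) := by
              rw [abs_of_nonneg hβ0]; ring
        _ ≤ β * inner ℝ (gradient φ u - gradient φ x) p := h
      exact le_of_mul_le_mul_left this h0
  -- error terms via Cauchy-Schwarz
  have herr : ∀ y : EuclideanSpace ℝ (Fin d),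
      |(inner ℝ (g y - gradient φ y) p : ℝ)| ≤ εg * ‖p‖ := by
    intro y
    calc |(inner ℝ (g y - gradient φ y) p : ℝ)| ≤ ‖g y - gradient φ y‖ * ‖p‖ :=
          abs_real_inner_le_norm _ _
    _ ≤ εg * ‖p‖ := by gcongr; exact hg y
  have h1 := (abs_le.mp (herr u)).1
  have h2 := (abs_le.mp (herr x)).2
  have hsplit : (inner ℝ (g u - g x) p : ℝ)
      = inner ℝ (gradient φ u - gradient φ x) p
        + inner ℝ (g u - gradient φ u) p - inner ℝ (g x - gradient φ x) p := by
    rw [← inner_add_left, ← inner_sub_left]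
    congr 1
    abel
  have hlow : m * β * ‖p‖ ^ 2 ≥ 2 * (2 + c₃) * εg * ‖p‖ := by
    have := mul_le_mul_of_nonneg_right hβm hpn.le
    calc 2 * (2 + c₃) * εg * ‖p‖ ≤ β * (m * ‖p‖) * ‖p‖ := this
    _ = m * β * ‖p‖ ^ 2 := by ring
  rw [hsplit]
  have : 2 * (1 + c₃) * εg * ‖p‖ = 2 * (2 + c₃) * εg * ‖p‖ - εg * ‖p‖ - εg * ‖p‖ := by ring
  rw [this]
  have := hkey.trans' hlow
  linarith
end

section
/- Let φ : ℝ^d → ℝ be differentiable and m-strongly convex in the sense that ⟨∇φ(u) − ∇φ(v), u − v⟩ ≥ m ‖u − v‖² for all u, v ∈ ℝ^d, with m > 0. Let g : ℝ^d → ℝ^d satisfy ‖g(x) − ∇φ(x)‖ ≤ ε_g for all x, with ε_g ≥ 0. Fix x, p ∈ ℝ^d with p ≠ 0. Then lim_{β → ∞} ⟨∇φ(x + β p), p⟩ = ∞, and for any c₃ > 0 there exists β̄ > 0 such that for all β ≥ β̄ the noise control condition ⟨g(x + β p) − g(x), p⟩ ≥ 2(1 + c₃) ε_g ‖p‖ holds.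 -/
/-- For an `m`-strongly convex function, the directional derivative along a nonzero
direction `p` tends to infinity with the steplength, and consequently the lengthening
procedure terminates finitely: there is `β̄ > 0` such that the noise control condition
holds for every `β ≥ β̄`. -/
theorem lengthening_terminates_for_strongly_convex
    {d : ℕ} (φ : EuclideanSpace ℝ (Fin d) → ℝ) (hφ : Differentiable ℝ φ)
    (m : ℝ) (hm : 0 < m)
    (hconv : ∀ u v : EuclideanSpace ℝ (Fin d),
      (inner ℝ (gradient φ u - gradient φ v) (u - v) : ℝ) ≥ m * ‖u - v‖ ^ 2)
    (g : EuclideanSpace ℝ (Fin d) → EuclideanSpace ℝ (Fin d))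
    (εg : ℝ) (hεg : 0 ≤ εg)
    (hg : ∀ x, ‖g x - gradient φ x‖ ≤ εg)
    (x p : EuclideanSpace ℝ (Fin d)) (hp : p ≠ 0) :
    Filter.Tendsto (fun β : ℝ => (inner ℝ (gradient φ (x + β • p)) p : ℝ))
        Filter.atTop Filter.atTop ∧
      ∀ c₃ : ℝ, 0 < c₃ → ∃ βbar : ℝ, 0 < βbar ∧ ∀ β : ℝ, β ≥ βbar →
        (inner ℝ (g (x + β • p) - g x) p : ℝ) ≥ 2 * (1 + c₃) * εg * ‖p‖ := by
  have hnp : 0 < ‖p‖ := norm_pos_iff.mpr hp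
  -- key estimate
  have key : ∀ β : ℝ, 0 < β →
      (inner ℝ (gradient φ (x + β • p) - gradient φ x) p : ℝ) ≥ m * β * ‖p‖ ^ 2 := by
    intro β hβ
    have h := hconv (x + β • p) x
    have hsub : (x + β • p) - x = β • p := by abel
    rw [hsub, real_inner_smul_right, norm_smul] at h
    have h2 : β * (inner ℝ (gradient φ (x + β • p) - gradient φ x) p : ℝ)
        ≥ β * (m * β * ‖p‖ ^ 2) := by
      calc β * (inner ℝ (gradient φ (x + β • p) - gradient φ x) p : ℝ)
          ≥ m * (‖β‖ * ‖p‖) ^ 2 := h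
        _ = β * (m * β * ‖p‖ ^ 2) := by
            rw [Real.norm_eq_abs, abs_of_pos hβ]; ring
    exact le_of_mul_le_mul_left h2 hβ
  constructor
  · apply Filter.tendsto_atTop_mono' _
      (h := (Filter.eventually_gt_atTop 0).mono ?_)
    · exact Filter.tendsto_atTop_add_const_left _ ((inner ℝ (gradient φ x) p : ℝ))
        (Filter.Tendsto.const_mul_atTop (mul_pos hm (pow_pos hnp 2))
          Filter.tendsto_id)
    · intro β hβ
      have h := key β hβ
      have : (inner ℝ (gradient φ (x + β • p)) p : ℝ)
          = (inner ℝ (gradient φ (x + β • p) - gradient φ x) p : ℝ)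
            + (inner ℝ (gradient φ x) p : ℝ) := by
        rw [inner_sub_left]; ring
      rw [this]
      simp only [id_eq]
      nlinarith
  · intro c₃ hc₃
    refine ⟨max 1 ((2 * (1 + c₃) * εg + 2 * εg) / (m * ‖p‖)), lt_of_lt_of_le one_pos (le_max_left _ _), ?_⟩
    intro β hβ
    have hβ1 : (1 : ℝ) ≤ β := le_trans (le_max_left _ _) hβ
    have hβpos : 0 < β := lt_of_lt_of_le one_pos hβ1
    have hkey := key β hβpos
    have e1 : |(inner ℝ (g (x + β • p) - gradient φ (x + β • p)) p : ℝ)| ≤ εg * ‖p‖ := by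
      calc |(inner ℝ (g (x + β • p) - gradient φ (x + β • p)) p : ℝ)|
          ≤ ‖g (x + β • p) - gradient φ (x + β • p)‖ * ‖p‖ := abs_real_inner_le_norm _ _
        _ ≤ εg * ‖p‖ := mul_le_mul_of_nonneg_right (hg _) (le_of_lt hnp)
    have e2 : |(inner ℝ (gradient φ x - g x) p : ℝ)| ≤ εg * ‖p‖ := by
      calc |(inner ℝ (gradient φ x - g x) p : ℝ)|
          ≤ ‖gradient φ x - g x‖ * ‖p‖ := abs_real_inner_le_norm _ _
        _ ≤ εg * ‖p‖ := by
            rw [norm_sub_rev]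
            exact mul_le_mul_of_nonneg_right (hg _) (le_of_lt hnp)
    have decomp : (inner ℝ (g (x + β • p) - g x) p : ℝ)
        = (inner ℝ (g (x + β • p) - gradient φ (x + β • p)) p : ℝ)
          + (inner ℝ (gradient φ (x + β • p) - gradient φ x) p : ℝ)
          + (inner ℝ (gradient φ x - g x) p : ℝ) := by
      rw [← inner_add_left, ← inner_add_left]
      congr 1
      abel
    have hβ2 : (2 * (1 + c₃) * εg + 2 * εg) / (m * ‖p‖) ≤ β :=
      le_trans (le_max_right _ _) hβ
    have hmp : 0 < m * ‖p‖ := mul_pos hm hnp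
    have hlin : 2 * (1 + c₃) * εg + 2 * εg ≤ m * β * ‖p‖ := by
      rw [div_le_iff₀ hmp] at hβ2
      nlinarith
    have hlin2 : (2 * (1 + c₃) * εg + 2 * εg) * ‖p‖ ≤ m * β * ‖p‖ ^ 2 := by
      nlinarith
    rw [decomp]
    have h1 := abs_le.mp e1
    have h2 := abs_le.mp e2
    nlinarith
end

section
/- Let φ : ℝ^d → ℝ be differentiable with ⟨∇φ(u) − ∇φ(v), u − v⟩ ≥ m ‖u − v‖² for all u, v ∈ ℝ^d, where m > 0. Let g : ℝ^d → ℝ^d satisfy ‖g(x) − ∇φ(x)‖ ≤ ε_g for all x, with ε_g > 0. Fix x ∈ ℝ^d and s ∈ ℝ^d with s ≠ 0, let y = g(x + s) − g(x), and suppose ⟨s, y⟩ ≥ c ε_g ‖s‖ for some constant c > 2. Then ⟨s, y⟩ / ⟨s, s⟩ ≥ (c/(c+2)) m. -/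
/-- First inequality of Lemma 3.1: under the noise control condition with constant `c > 2`,
the observed curvature ratio `⟨s, y⟩ / ⟨s, s⟩` is bounded below by `(c/(c+2)) m`. -/
theorem curvature_ratio_lower_bound
    {d : ℕ} (φ : EuclideanSpace ℝ (Fin d) → ℝ) (hφ : Differentiable ℝ φ)
    (m : ℝ) (hm : 0 < m)
    (hconv : ∀ u v : EuclideanSpace ℝ (Fin d),
      (inner ℝ (gradient φ u - gradient φ v) (u - v) : ℝ) ≥ m * ‖u - v‖ ^ 2)
    (g : EuclideanSpace ℝ (Fin d) → EuclideanSpace ℝ (Fin d))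
    (εg : ℝ) (hεg : 0 < εg)
    (hg : ∀ x, ‖g x - gradient φ x‖ ≤ εg)
    (x s : EuclideanSpace ℝ (Fin d)) (hs : s ≠ 0)
    (y : EuclideanSpace ℝ (Fin d)) (hy : y = g (x + s) - g x)
    (c : ℝ) (hc : 2 < c)
    (hnc : (inner ℝ s y : ℝ) ≥ c * εg * ‖s‖) :
    (inner ℝ s y : ℝ) / (inner ℝ s s : ℝ) ≥ (c / (c + 2)) * m := by
  have hsnorm : (0:ℝ) < ‖s‖ := norm_pos_iff.mpr hs
  set e : EuclideanSpace ℝ (Fin d) :=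
    (g (x + s) - gradient φ (x + s)) - (g x - gradient φ x) with he
  have hye : y = (gradient φ (x + s) - gradient φ x) + e := by
    rw [hy, he]; abel
  have henorm : ‖e‖ ≤ 2 * εg := by
    calc ‖e‖ ≤ ‖g (x + s) - gradient φ (x + s)‖ + ‖g x - gradient φ x‖ := norm_sub_le _ _
    _ ≤ εg + εg := add_le_add (hg _) (hg _)
    _ = 2 * εg := by ring
  have hconv' : (inner ℝ s (gradient φ (x + s) - gradient φ x) : ℝ) ≥ m * ‖s‖ ^ 2 := by
    have := hconv (x + s) x
    simp only [add_sub_cancel_left] at this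
    rwa [real_inner_comm]
  have hinner_e : (inner ℝ s e : ℝ) ≥ -(2 * εg * ‖s‖) := by
    have h1 : |(inner ℝ s e : ℝ)| ≤ ‖s‖ * ‖e‖ := abs_real_inner_le_norm s e
    have h2 : ‖s‖ * ‖e‖ ≤ ‖s‖ * (2 * εg) :=
      mul_le_mul_of_nonneg_left henorm (norm_nonneg _)
    nlinarith [neg_abs_le (inner ℝ s e : ℝ)]
  have hkey : (inner ℝ s y : ℝ) ≥ m * ‖s‖ ^ 2 - 2 * εg * ‖s‖ := by
    rw [hye, inner_add_right]
    linarith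
  have hmain : (c + 2) * (inner ℝ s y : ℝ) ≥ c * (m * ‖s‖ ^ 2) := by
    nlinarith [hkey, hnc]
  have hss : (inner ℝ s s : ℝ) = ‖s‖ ^ 2 := real_inner_self_eq_norm_sq s
  have hcp : (0:ℝ) < c + 2 := by linarith
  rw [hss, ge_iff_le, le_div_iff₀ (by positivity : (0:ℝ) < ‖s‖ ^ 2),
    div_mul_eq_mul_div, div_mul_eq_mul_div, div_le_iff₀ hcp]
  nlinarith [hmain]
end

section
/- Let φ : ℝ^d → ℝ be differentiable with M-Lipschitz gradient: ‖∇φ(u) − ∇φ(v)‖ ≤ M ‖u − v‖ for all u, v ∈ ℝ^d, where M > 0. Let g : ℝ^d → ℝ^d satisfy ‖g(x) − ∇φ(x)‖ ≤ ε_g for all x, with ε_g > 0. Fix x ∈ ℝ^d and s ∈ ℝ^d with s ≠ 0, let y = g(x + s) − g(x), and suppose ⟨s, y⟩ ≥ c ε_g ‖s‖ for some constant c > 2. Then ‖s‖ ≥ (c − 2) ε_g / M. -/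
/-- Lower bound on the step length implied by the noise control condition with `c > 2`
when `∇φ` is `M`-Lipschitz (intermediate step in the proof of Lemma 3.1). -/
theorem step_length_lower_bound
    {d : ℕ} (φ : EuclideanSpace ℝ (Fin d) → ℝ) (hφ : Differentiable ℝ φ)
    (M : ℝ) (hM : 0 < M)
    (hlip : ∀ u v : EuclideanSpace ℝ (Fin d),
      ‖gradient φ u - gradient φ v‖ ≤ M * ‖u - v‖)
    (g : EuclideanSpace ℝ (Fin d) → EuclideanSpace ℝ (Fin d))
    (εg : ℝ) (hεg : 0 < εg)
    (hg : ∀ x, ‖g x - gradient φ x‖ ≤ εg)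
    (x s : EuclideanSpace ℝ (Fin d)) (hs : s ≠ 0)
    (y : EuclideanSpace ℝ (Fin d)) (hy : y = g (x + s) - g x)
    (c : ℝ) (hc : 2 < c)
    (hnc : (inner ℝ s y : ℝ) ≥ c * εg * ‖s‖) :
    ‖s‖ ≥ (c - 2) * εg / M := by
  have hns : (0:ℝ) < ‖s‖ := norm_pos_iff.mpr hs
  have hynorm : ‖y‖ ≤ M * ‖s‖ + 2 * εg := by
    have h1 := hg (x + s)
    have h2 := hg x
    have h3 := hlip (x + s) x
    have hxs : x + s - x = s := by abel
    rw [hxs] at h3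
    have : y = (g (x + s) - gradient φ (x + s)) + (gradient φ (x + s) - gradient φ x)
        - (g x - gradient φ x) := by rw [hy]; abel
    calc ‖y‖ ≤ ‖(g (x + s) - gradient φ (x + s)) + (gradient φ (x + s) - gradient φ x)‖
          + ‖g x - gradient φ x‖ := by rw [this]; exact norm_sub_le _ _
      _ ≤ ‖g (x + s) - gradient φ (x + s)‖ + ‖gradient φ (x + s) - gradient φ x‖
          + ‖g x - gradient φ x‖ := by gcongr; exact norm_add_le _ _
      _ ≤ εg + M * ‖s‖ + εg := by gcongr
      _ = M * ‖s‖ + 2 * εg := by ring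
  have hcs : (inner ℝ s y : ℝ) ≤ ‖s‖ * ‖y‖ := real_inner_le_norm s y
  have key : c * εg * ‖s‖ ≤ ‖s‖ * (M * ‖s‖ + 2 * εg) := by
    calc c * εg * ‖s‖ ≤ (inner ℝ s y : ℝ) := hnc
      _ ≤ ‖s‖ * ‖y‖ := hcs
      _ ≤ ‖s‖ * (M * ‖s‖ + 2 * εg) := by gcongr
  have key2 : (c - 2) * εg ≤ M * ‖s‖ := by nlinarith
  rw [ge_iff_le, div_le_iff₀ hM]
  linarith
end

section
/- Let φ : ℝ^d → ℝ be differentiable and satisfy, for constants 0 < m ≤ M and all u, v ∈ ℝ^d: ⟨∇φ(u) − ∇φ(v), u − v⟩ ≥ m ‖u − v‖² and ‖∇φ(u) − ∇φ(v)‖ ≤ M ‖u − v‖. Fix x ∈ ℝ^d, s ∈ ℝ^d with s ≠ 0, ε_g ≥ 0, and let y ∈ ℝ^d satisfy ‖y − (∇φ(x + s) − ∇φ(x))‖ ≤ 2 ε_g and ⟨s, y⟩ > 0. Then ⟨y, y⟩ / ⟨s, y⟩ ≤ (M + m) + (2ε_g + M‖s‖)(2ε_g − m‖s‖) / ⟨s,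 y⟩. -/
open InnerProductSpace

variable {d : ℕ}
local notation "E" => EuclideanSpace ℝ (Fin d)

lemma line_hasDerivAt (f : E → ℝ) (hf : Differentiable ℝ f) (u dd : E) (t : ℝ) :
    HasDerivAt (fun t : ℝ => f (u + t • dd)) (inner ℝ (gradient f (u + t • dd)) dd : ℝ) t := by
  have h1 : HasDerivAt (fun t : ℝ => u + t • dd) dd t := by
    simpa using ((hasDerivAt_id t).smul_const dd).const_add u
  have h2 := (hf (u + t • dd)).hasGradientAt
  rw [hasGradientAt_iff_hasFDerivAt] at h2
  have := h2.comp_hasDerivAt t h1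
  simp at this ⊢
  exact this

lemma strong_grad_ineq (f : E → ℝ) (hf : Differentiable ℝ f) (c : ℝ)
    (h : ∀ u v : E, (inner ℝ (gradient f u - gradient f v) (u - v) : ℝ) ≥ c * ‖u - v‖ ^ 2)
    (u v : E) :
    f u + (inner ℝ (gradient f u) (v - u) : ℝ) + c / 2 * ‖v - u‖ ^ 2 ≤ f v := by
  set dd := v - u with hdd
  set k : ℝ → ℝ := fun t => f (u + t • dd) - t * (inner ℝ (gradient f u) dd : ℝ)
      - c * t ^ 2 / 2 * ‖dd‖ ^ 2 with hk
  have hder : ∀ t : ℝ, HasDerivAt k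
      ((inner ℝ (gradient f (u + t • dd)) dd : ℝ) - (inner ℝ (gradient f u) dd : ℝ)
        - c * t * ‖dd‖ ^ 2) t := by
    intro t
    have h1 := line_hasDerivAt f hf u dd t
    have h2 : HasDerivAt (fun t : ℝ => t * (inner ℝ (gradient f u) dd : ℝ))
        (inner ℝ (gradient f u) dd : ℝ) t := by
      simpa using (hasDerivAt_id t).mul_const (inner ℝ (gradient f u) dd : ℝ)
    have h3 : HasDerivAt (fun t : ℝ => c * t ^ 2 / 2 * ‖dd‖ ^ 2)
        (c * t * ‖dd‖ ^ 2) t := by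
      have : HasDerivAt (fun t : ℝ => t ^ 2) (2 * t) t := by
        simpa using hasDerivAt_pow 2 t
      have := (((this.const_mul c).div_const 2).mul_const (‖dd‖ ^ 2))
      exact this.congr_deriv (by ring)
    exact (h1.sub h2).sub h3
  have hmono : MonotoneOn k (Set.Icc (0:ℝ) 1) := by
    apply monotoneOn_of_deriv_nonneg (convex_Icc 0 1)
    · exact (fun t _ => ((hder t).differentiableAt.continuousAt.continuousWithinAt))
    · intro t ht
      exact ((hder t).differentiableAt).differentiableWithinAt
    · intro t ht
      rw [(hder t).deriv]
      rw [interior_Icc] at ht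
      have key := h (u + t • dd) u
      have heq : u + t • dd - u = t • dd := by abel
      rw [heq] at key
      simp only [inner_sub_left, real_inner_smul_right, norm_smul, Real.norm_eq_abs] at key
      have ht0 : 0 < t := ht.1
      rw [abs_of_pos ht0] at key
      have h2 : (c * t * ‖dd‖ ^ 2) * t ≤ ((inner ℝ (gradient f (u + t • dd)) dd : ℝ)
          - (inner ℝ (gradient f u) dd : ℝ)) * t := by nlinarith [key]
      have h3 := le_of_mul_le_mul_right h2 ht0
      linarith
  have h01 := hmono (Set.left_mem_Icc.mpr one_pos.le) (Set.right_mem_Icc.mpr one_pos.le) one_pos.le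
  simp only [hk] at h01
  have : u + (1:ℝ) • dd = v := by simp [hdd]
  rw [this] at h01
  simp only [zero_smul, add_zero, zero_mul, zero_pow, mul_zero, zero_div, sub_zero,
    ne_eq, OfNat.ofNat_ne_zero, not_false_iff, one_mul, one_pow, mul_one] at h01
  nlinarith [h01]

lemma baillon (ψ : E → ℝ) (Gψ : E → E) (L : ℝ) (hL : 0 < L)
    (Hlow : ∀ u v : E, ψ u + (inner ℝ (Gψ u) (v - u) : ℝ) ≤ ψ v)
    (Hup : ∀ u v : E, ψ v ≤ ψ u + (inner ℝ (Gψ u) (v - u) : ℝ) + L / 2 * ‖v - u‖ ^ 2)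
    (a b : E) :
    ‖Gψ a - Gψ b‖ ^ 2 ≤ L * (inner ℝ (Gψ a - Gψ b) (a - b) : ℝ) := by
  have A : ∀ p q : E, ψ q + (inner ℝ (Gψ q) (p - q) : ℝ)
      + ‖Gψ p - Gψ q‖ ^ 2 / (2 * L) ≤ ψ p := by
    intro p q
    set h := Gψ p - Gψ q with hh
    set z := p - L⁻¹ • h with hz
    have h1 := Hlow q z
    have h2 := Hup p z
    have e1 : z - p = -(L⁻¹ • h) := by rw [hz]; abel
    have e2 : z - q = (p - q) - L⁻¹ • h := by rw [hz]; abel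
    rw [e1] at h2
    rw [e2] at h1
    rw [inner_neg_right, real_inner_smul_right] at h2
    rw [inner_sub_right, real_inner_smul_right] at h1
    have e3 : ‖-(L⁻¹ • h)‖ ^ 2 = L⁻¹ ^ 2 * ‖h‖ ^ 2 := by
      rw [norm_neg, norm_smul, Real.norm_eq_abs, mul_pow, sq_abs]
    rw [e3] at h2
    have e4 : (inner ℝ (Gψ p) h : ℝ) - (inner ℝ (Gψ q) h : ℝ) = ‖h‖ ^ 2 := by
      rw [← inner_sub_left, ← hh, real_inner_self_eq_norm_sq]
    have hLne : L ≠ 0 := ne_of_gt hL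
    have hinv : L * L⁻¹ = 1 := mul_inv_cancel₀ hLne
    -- combine h1 and h2
    have : ψ q + (inner ℝ (Gψ q) (p - q) : ℝ) + L⁻¹ * ‖h‖ ^ 2
        - L / 2 * (L⁻¹ ^ 2 * ‖h‖ ^ 2) ≤ ψ p := by nlinarith [h1, h2, e4]
    have e5 : L⁻¹ * ‖h‖ ^ 2 - L / 2 * (L⁻¹ ^ 2 * ‖h‖ ^ 2) = ‖h‖ ^ 2 / (2 * L) := by
      field_simp
      ring
    linarith [this, e5.symm.le, e5.le]
  have A1 := A a b
  have A2 := A b a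
  have e6 : ‖Gψ b - Gψ a‖ = ‖Gψ a - Gψ b‖ := norm_sub_rev _ _
  rw [e6] at A2
  have e7 : (inner ℝ (Gψ a) (b - a) : ℝ) = -(inner ℝ (Gψ a) (a - b) : ℝ) := by
    rw [← inner_neg_right]; congr 1; abel
  rw [e7] at A2
  have e8 : (inner ℝ (Gψ a - Gψ b) (a - b) : ℝ)
      = (inner ℝ (Gψ a) (a - b) : ℝ) - (inner ℝ (Gψ b) (a - b) : ℝ) := inner_sub_left _ _ _
  have h2L : 0 < 2 * L := by linarith
  rw [e8]
  have := add_le_add A1 A2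
  have hdiv : ‖Gψ a - Gψ b‖ ^ 2 / (2 * L) * (2 * L) = ‖Gψ a - Gψ b‖ ^ 2 := by
    field_simp
  nlinarith [this, hdiv]

set_option maxHeartbeats 1000000 in
/-- Inequality (3.10) in the proof of Lemma 3.1: bound on `⟨y, y⟩ / ⟨s, y⟩` for a noisy
gradient difference `y` deviating by at most `2 ε_g` from the true difference. -/
theorem noisy_curvature_upper_bound_general
    {d : ℕ} (φ : EuclideanSpace ℝ (Fin d) → ℝ) (hφ : Differentiable ℝ φ)
    (m M : ℝ) (hm : 0 < m) (hmM : m ≤ M)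
    (hconv : ∀ u v : EuclideanSpace ℝ (Fin d),
      (inner ℝ (gradient φ u - gradient φ v) (u - v) : ℝ) ≥ m * ‖u - v‖ ^ 2)
    (hlip : ∀ u v : EuclideanSpace ℝ (Fin d),
      ‖gradient φ u - gradient φ v‖ ≤ M * ‖u - v‖)
    (x s : EuclideanSpace ℝ (Fin d)) (hs : s ≠ 0)
    (εg : ℝ) (hεg : 0 ≤ εg)
    (y : EuclideanSpace ℝ (Fin d))
    (hy : ‖y - (gradient φ (x + s) - gradient φ x)‖ ≤ 2 * εg)
    (hsy : (inner ℝ s y : ℝ) > 0) :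
    (inner ℝ y y : ℝ) / (inner ℝ s y : ℝ) ≤
      (M + m) + (2 * εg + M * ‖s‖) * (2 * εg - m * ‖s‖) / (inner ℝ s y : ℝ) := by
  set g : EuclideanSpace ℝ (Fin d) := gradient φ (x + s) - gradient φ x with hg
  have hxs : x + s - x = s := by abel
  have hconv' : (inner ℝ g s : ℝ) ≥ m * ‖s‖ ^ 2 := by
    have := hconv (x + s) x; rwa [hxs] at this
  have hlip' : ‖g‖ ≤ M * ‖s‖ := by
    have := hlip (x + s) x; rwa [hxs] at this
  -- key inequality: ‖g‖² + m·M‖s‖² ≤ (M+m)⟪g,s⟫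
  have key : ‖g‖ ^ 2 + m * M * ‖s‖ ^ 2 ≤ (M + m) * (inner ℝ g s : ℝ) := by
    rcases eq_or_lt_of_le hmM with heq | hlt
    · subst heq
      nlinarith [hconv', hlip', norm_nonneg g, norm_nonneg s, hm]
    · -- m < M : Baillon–Haddad argument applied to ψ = φ - m/2‖·‖²
      set L := M - m with hL
      have hLpos : 0 < L := by simp [hL]; linarith
      have lower := strong_grad_ineq φ hφ m hconv
      have upper : ∀ u v : EuclideanSpace ℝ (Fin d),
          φ v ≤ φ u + (inner ℝ (gradient φ u) (v - u) : ℝ) + M / 2 * ‖v - u‖ ^ 2 := by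
        have hneg : Differentiable ℝ (fun u : EuclideanSpace ℝ (Fin d) => -φ u) := hφ.neg
        have hgneg : ∀ u : EuclideanSpace ℝ (Fin d), gradient (fun u : EuclideanSpace ℝ (Fin d) => -φ u) u = -gradient φ u := by
          intro u
          have : HasGradientAt (fun u : EuclideanSpace ℝ (Fin d) => -φ u) (-gradient φ u) u := by
            rw [hasGradientAt_iff_hasFDerivAt, map_neg]
            exact (hasGradientAt_iff_hasFDerivAt.mp (hφ u).hasGradientAt).neg
          exact this.gradient
        have hmono : ∀ u v : EuclideanSpace ℝ (Fin d),
            (inner ℝ (gradient (fun u : EuclideanSpace ℝ (Fin d) => -φ u) u - gradient (fun u : EuclideanSpace ℝ (Fin d) => -φ u) v) (u - v) : ℝ)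
              ≥ (-M) * ‖u - v‖ ^ 2 := by
          intro u v
          rw [hgneg, hgneg]
          have e : (-gradient φ u - -gradient φ v) = -(gradient φ u - gradient φ v) := by abel
          rw [e, inner_neg_left]
          have hcs : (inner ℝ (gradient φ u - gradient φ v) (u - v) : ℝ)
              ≤ ‖gradient φ u - gradient φ v‖ * ‖u - v‖ := real_inner_le_norm _ _
          have := hlip u v
          nlinarith [norm_nonneg (u - v)]
        have := strong_grad_ineq (fun u : EuclideanSpace ℝ (Fin d) => -φ u) hneg (-M) hmono
        intro u v
        have h2 := this u v
        rw [hgneg, inner_neg_left] at h2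
        linarith
      set ψ : EuclideanSpace ℝ (Fin d) → ℝ := fun u => φ u - m / 2 * ‖u‖ ^ 2 with hψ
      set Gψ : EuclideanSpace ℝ (Fin d) → EuclideanSpace ℝ (Fin d) := fun u => gradient φ u - m • u with hGψ
      have Hlow : ∀ u v : EuclideanSpace ℝ (Fin d), ψ u + (inner ℝ (Gψ u) (v - u) : ℝ) ≤ ψ v := by
        intro u v
        simp only [hψ, hGψ, inner_sub_left, real_inner_smul_left]
        have hid : ‖v - u‖ ^ 2 = ‖v‖ ^ 2 - 2 * (inner ℝ v u : ℝ) + ‖u‖ ^ 2 :=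
          norm_sub_sq_real v u
        have hiu : (inner ℝ u (v - u) : ℝ) = (inner ℝ u v : ℝ) - ‖u‖ ^ 2 := by
          rw [inner_sub_right, real_inner_self_eq_norm_sq]
        have hcomm : (inner ℝ u v : ℝ) = (inner ℝ v u : ℝ) := real_inner_comm v u
        have := lower u v
        nlinarith [this]
      have Hup : ∀ u v : EuclideanSpace ℝ (Fin d), ψ v ≤ ψ u + (inner ℝ (Gψ u) (v - u) : ℝ) + L / 2 * ‖v - u‖ ^ 2 := by
        intro u v
        simp only [hψ, hGψ, inner_sub_left, real_inner_smul_left, hL]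
        have hid : ‖v - u‖ ^ 2 = ‖v‖ ^ 2 - 2 * (inner ℝ v u : ℝ) + ‖u‖ ^ 2 :=
          norm_sub_sq_real v u
        have hiu : (inner ℝ u (v - u) : ℝ) = (inner ℝ u v : ℝ) - ‖u‖ ^ 2 := by
          rw [inner_sub_right, real_inner_self_eq_norm_sq]
        have hcomm : (inner ℝ u v : ℝ) = (inner ℝ v u : ℝ) := real_inner_comm v u
        have := upper u v
        nlinarith [this]
      have hb := baillon ψ Gψ L hLpos Hlow Hup (x + s) x
      rw [hxs] at hb
      have hGdiff : Gψ (x + s) - Gψ x = g - m • s := by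
        simp only [hGψ, hg, smul_add]
        abel
      rw [hGdiff] at hb
      have e1 : ‖g - m • s‖ ^ 2 = ‖g‖ ^ 2 - 2 * m * (inner ℝ g s : ℝ) + m ^ 2 * ‖s‖ ^ 2 := by
        rw [norm_sub_sq_real, real_inner_smul_right, norm_smul, Real.norm_eq_abs,
          mul_pow, sq_abs]
        ring
      have e2 : (inner ℝ (g - m • s) s : ℝ) = (inner ℝ g s : ℝ) - m * ‖s‖ ^ 2 := by
        rw [inner_sub_left, real_inner_smul_left, real_inner_self_eq_norm_sq]
      rw [e1, e2, hL] at hb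
      nlinarith [hb]
  -- final algebraic part
  set e : EuclideanSpace ℝ (Fin d) := y - g with hedef
  have he : ‖e‖ ≤ 2 * εg := by rw [hedef, hg]; exact hy
  have hye : y = g + e := by rw [hedef]; abel
  set w : EuclideanSpace ℝ (Fin d) := (2:ℝ) • g - (M + m) • s with hwdef
  have hw2 : ‖w‖ ^ 2 = 4 * ‖g‖ ^ 2 - 4 * (M + m) * (inner ℝ g s : ℝ)
      + (M + m) ^ 2 * ‖s‖ ^ 2 := by
    rw [hwdef, norm_sub_sq_real, real_inner_smul_right, real_inner_smul_left,
      norm_smul, norm_smul, Real.norm_eq_abs, Real.norm_eq_abs, mul_pow, mul_pow,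
      sq_abs, sq_abs]
    ring
  have hwle : ‖w‖ ≤ (M - m) * ‖s‖ := by
    have hb2 : ‖w‖ ^ 2 ≤ ((M - m) * ‖s‖) ^ 2 := by rw [hw2]; nlinarith [key]
    have hpos : 0 ≤ (M - m) * ‖s‖ :=
      mul_nonneg (by linarith) (norm_nonneg s)
    nlinarith [norm_nonneg w, hb2, hpos]
  have hcs : (inner ℝ w e : ℝ) ≤ (M - m) * ‖s‖ * (2 * εg) := by
    calc (inner ℝ w e : ℝ) ≤ ‖w‖ * ‖e‖ := real_inner_le_norm w e
      _ ≤ (M - m) * ‖s‖ * (2 * εg) := by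
          apply mul_le_mul hwle he (norm_nonneg e)
          exact mul_nonneg (by linarith) (norm_nonneg s)
  have hwe : (inner ℝ w e : ℝ) = 2 * (inner ℝ g e : ℝ) - (M + m) * (inner ℝ s e : ℝ) := by
    rw [hwdef, inner_sub_left, real_inner_smul_left, real_inner_smul_left]
  have hyy : (inner ℝ y y : ℝ) = ‖g‖ ^ 2 + 2 * (inner ℝ g e : ℝ) + ‖e‖ ^ 2 := by
    rw [hye, real_inner_self_eq_norm_sq, norm_add_sq_real]
  have hsy2 : (inner ℝ s y : ℝ) = (inner ℝ s g : ℝ) + (inner ℝ s e : ℝ) := by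
    rw [hye, inner_add_right]
  have hcomm : (inner ℝ s g : ℝ) = (inner ℝ g s : ℝ) := real_inner_comm g s
  have he2 : ‖e‖ ^ 2 ≤ 4 * εg ^ 2 := by nlinarith [norm_nonneg e, he]
  have hnum : (inner ℝ y y : ℝ) ≤ (M + m) * (inner ℝ s y : ℝ)
      + (2 * εg + M * ‖s‖) * (2 * εg - m * ‖s‖) := by
    rw [hyy, hsy2, hcomm]
    nlinarith [key, hcs, hwe, he2]
  rw [div_le_iff₀ hsy]
  have hc : ((M + m) + (2 * εg + M * ‖s‖) * (2 * εg - m * ‖s‖) / (inner ℝ s y : ℝ))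
      * (inner ℝ s y : ℝ) = (M + m) * (inner ℝ s y : ℝ)
      + (2 * εg + M * ‖s‖) * (2 * εg - m * ‖s‖) := by
    rw [add_mul, div_mul_cancel₀ _ (ne_of_gt hsy)]
  rw [hc]
  exact hnum
end

section
/- (Lemma 3.1) Let φ : ℝ^d → ℝ be differentiable and satisfy, for constants 0 < m ≤ M and all u, v ∈ ℝ^d: ⟨∇φ(u) − ∇φ(v), u − v⟩ ≥ m ‖u − v‖² and ‖∇φ(u) − ∇φ(v)‖ ≤ M ‖u − v‖. Let g : ℝ^d → ℝ^d satisfy ‖g(x) − ∇φ(x)‖ ≤ ε_g for all x, with ε_g > 0. Fix x ∈ ℝ^d and s ∈ ℝ^d with s ≠ 0, let y = g(x + s) − g(x), and suppose ⟨s, y⟩ ≥ c ε_g ‖s‖ with c > 2. Then ⟨s, y⟩ / ⟨s, s⟩ ≥ (c/(c+2)) m and ⟨y, y⟩ / ⟨s, y⟩ ≤ (c/(c−2)) M. -/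
open InnerProductSpace

variable {d : ℕ}

local notation "E" => EuclideanSpace ℝ (Fin d)

lemma grad_dir (φ : E → ℝ) (hφ : Differentiable ℝ φ) (u w : E) (t : ℝ) :
    HasDerivAt (fun t : ℝ => φ (u + t • w)) (inner ℝ (gradient φ (u + t • w)) w : ℝ) t := by
  have h1 : HasDerivAt (fun t : ℝ => u + t • w) w t := by
    simpa using ((hasDerivAt_id t).smul_const w).const_add u
  have h2 := (hφ (u + t • w)).hasGradientAt.hasFDerivAt
  have h3 := h2.comp_hasDerivAt t h1
  exact h3.congr_deriv (by rw [InnerProductSpace.toDual_apply_apply])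

lemma conv_ineq (φ : E → ℝ) (hφ : Differentiable ℝ φ)
    (hmono : ∀ u v : E, (0:ℝ) ≤ (inner ℝ (gradient φ u - gradient φ v) (u - v) : ℝ))
    (u v : E) :
    φ u + (inner ℝ (gradient φ u) (v - u) : ℝ) ≤ φ v := by
  set w := v - u with hw
  set ψ : ℝ → ℝ := fun t => φ (u + t • w) - t * (inner ℝ (gradient φ u) w : ℝ) with hψ
  have hd : ∀ t : ℝ, HasDerivAt ψ
      ((inner ℝ (gradient φ (u + t • w)) w : ℝ) - (inner ℝ (gradient φ u) w : ℝ)) t := by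
    intro t
    exact (grad_dir φ hφ u w t).sub (hasDerivAt_mul_const _)
  have hmon : MonotoneOn ψ (Set.Icc (0:ℝ) 1) := by
    apply monotoneOn_of_deriv_nonneg (convex_Icc 0 1)
    · exact fun t _ => ((hd t).continuousAt).continuousWithinAt
    · exact fun t _ => ((hd t).differentiableAt).differentiableWithinAt
    · intro t ht
      rw [interior_Icc] at ht
      rw [(hd t).deriv]
      have h := hmono (u + t • w) u
      have he : u + t • w - u = t • w := by abel
      rw [he] at h
      have h2 : (inner ℝ (gradient φ (u + t • w) - gradient φ u) (t • w) : ℝ)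
          = t * (inner ℝ (gradient φ (u + t • w) - gradient φ u) w : ℝ) := by
        rw [real_inner_smul_right]
      rw [h2] at h
      have ht0 : 0 < t := ht.1
      have := nonneg_of_mul_nonneg_right h ht0
      rw [inner_sub_left, sub_nonneg] at this
      linarith
  have h01 := hmon (Set.mem_Icc.2 ⟨le_refl 0, zero_le_one⟩) (Set.mem_Icc.2 ⟨zero_le_one, le_refl 1⟩) zero_le_one
  simp only [hψ, zero_smul, add_zero, one_smul, zero_mul, sub_zero, one_mul] at h01
  have : u + w = v := by rw [hw]; abel
  rw [this] at h01
  linarith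

lemma descent_ineq (φ : E → ℝ) (hφ : Differentiable ℝ φ) (M : ℝ) (hM : 0 < M)
    (hlip : ∀ u v : E, ‖gradient φ u - gradient φ v‖ ≤ M * ‖u - v‖)
    (u v : E) :
    φ v ≤ φ u + (inner ℝ (gradient φ u) (v - u) : ℝ) + M / 2 * ‖v - u‖ ^ 2 := by
  set w := v - u with hw
  set χ : ℝ → ℝ := fun t => M / 2 * ‖w‖ ^ 2 * t ^ 2 + t * (inner ℝ (gradient φ u) w : ℝ)
    - φ (u + t • w) with hχ
  have hd : ∀ t : ℝ, HasDerivAt χ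
      (M / 2 * ‖w‖ ^ 2 * (2 * t) + (inner ℝ (gradient φ u) w : ℝ)
        - (inner ℝ (gradient φ (u + t • w)) w : ℝ)) t := by
    intro t
    have h1 : HasDerivAt (fun t : ℝ => M / 2 * ‖w‖ ^ 2 * t ^ 2) (M / 2 * ‖w‖ ^ 2 * (2 * t)) t := by
      simpa using (hasDerivAt_pow 2 t).const_mul (M / 2 * ‖w‖ ^ 2)
    exact (h1.add (hasDerivAt_mul_const _)).sub (grad_dir φ hφ u w t)
  have hmon : MonotoneOn χ (Set.Icc (0:ℝ) 1) := by
    apply monotoneOn_of_deriv_nonneg (convex_Icc 0 1)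
    · exact fun t _ => ((hd t).continuousAt).continuousWithinAt
    · exact fun t _ => ((hd t).differentiableAt).differentiableWithinAt
    · intro t ht
      rw [interior_Icc] at ht
      rw [(hd t).deriv]
      have ht0 : 0 < t := ht.1
      have hb : (inner ℝ (gradient φ (u + t • w) - gradient φ u) w : ℝ) ≤ M * t * ‖w‖ ^ 2 := by
        calc (inner ℝ (gradient φ (u + t • w) - gradient φ u) w : ℝ)
            ≤ ‖gradient φ (u + t • w) - gradient φ u‖ * ‖w‖ := real_inner_le_norm _ _
          _ ≤ M * ‖u + t • w - u‖ * ‖w‖ := by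
              have := hlip (u + t • w) u
              nlinarith [norm_nonneg w]
          _ = M * t * ‖w‖ ^ 2 := by
              have : u + t • w - u = t • w := by abel
              rw [this, norm_smul, Real.norm_eq_abs, abs_of_pos ht0]
              ring
      rw [inner_sub_left] at hb
      linarith
  have h01 := hmon (Set.mem_Icc.2 ⟨le_refl 0, zero_le_one⟩) (Set.mem_Icc.2 ⟨zero_le_one, le_refl 1⟩) zero_le_one
  simp only [hχ, zero_smul, add_zero, one_smul, zero_mul, mul_zero, mul_one, one_pow,
    sub_zero, one_mul, zero_pow, zero_add] at h01
  have huv : u + w = v := by rw [hw]; abel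
  rw [huv] at h01
  linarith

lemma key_ineq (φ : E → ℝ) (hφ : Differentiable ℝ φ) (M : ℝ) (hM : 0 < M)
    (hmono : ∀ u v : E, (0:ℝ) ≤ (inner ℝ (gradient φ u - gradient φ v) (u - v) : ℝ))
    (hlip : ∀ u v : E, ‖gradient φ u - gradient φ v‖ ≤ M * ‖u - v‖)
    (u v : E) :
    φ u + (inner ℝ (gradient φ u) (v - u) : ℝ) + ‖gradient φ v - gradient φ u‖ ^ 2 / (2 * M)
      ≤ φ v := by
  set δ : E := gradient φ v - gradient φ u with hδ
  set z : E := v - (1 / M) • δ with hz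
  have h1 := conv_ineq φ hφ hmono u z
  have h2 := descent_ineq φ hφ M hM hlip v z
  have hzv : z - v = -((1 / M) • δ) := by rw [hz]; abel
  have hzu : z - u = (v - u) - (1 / M) • δ := by rw [hz]; abel
  have e1 : (inner ℝ (gradient φ u) (z - u) : ℝ)
      = (inner ℝ (gradient φ u) (v - u) : ℝ) - (1 / M) * (inner ℝ (gradient φ u) δ : ℝ) := by
    rw [hzu, inner_sub_right, real_inner_smul_right]
  have e2 : (inner ℝ (gradient φ v) (z - v) : ℝ) = -((1 / M) * (inner ℝ (gradient φ v) δ : ℝ)) := by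
    rw [hzv, inner_neg_right, real_inner_smul_right]
  have e3 : ‖z - v‖ ^ 2 = (1 / M) ^ 2 * ‖δ‖ ^ 2 := by
    rw [hzv, norm_neg, norm_smul, Real.norm_eq_abs, mul_pow, sq_abs]
  have e4 : (inner ℝ (gradient φ v) δ : ℝ) - (inner ℝ (gradient φ u) δ : ℝ) = ‖δ‖ ^ 2 := by
    rw [← inner_sub_left, ← hδ, real_inner_self_eq_norm_sq]
  rw [e1] at h1
  rw [e2, e3] at h2
  have hM' : M ≠ 0 := ne_of_gt hM
  have hfs : M / 2 * ((1 / M) ^ 2 * ‖δ‖ ^ 2) = ‖δ‖ ^ 2 / (2 * M) := by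
    field_simp
  rw [hfs] at h2
  have e5 : (1 / M) * (inner ℝ (gradient φ v) δ : ℝ) - (1 / M) * (inner ℝ (gradient φ u) δ : ℝ)
      = ‖δ‖ ^ 2 / M := by
    rw [← mul_sub, e4]; field_simp
  have h2M : ‖δ‖ ^ 2 / M - ‖δ‖ ^ 2 / (2 * M) = ‖δ‖ ^ 2 / (2 * M) := by
    field_simp; ring
  linarith

lemma coco (φ : E → ℝ) (hφ : Differentiable ℝ φ) (M : ℝ) (hM : 0 < M)
    (hmono : ∀ u v : E, (0:ℝ) ≤ (inner ℝ (gradient φ u - gradient φ v) (u - v) : ℝ))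
    (hlip : ∀ u v : E, ‖gradient φ u - gradient φ v‖ ≤ M * ‖u - v‖)
    (u v : E) :
    ‖gradient φ u - gradient φ v‖ ^ 2 ≤ M * (inner ℝ (gradient φ u - gradient φ v) (u - v) : ℝ) := by
  have h1 := key_ineq φ hφ M hM hmono hlip u v
  have h2 := key_ineq φ hφ M hM hmono hlip v u
  rw [norm_sub_rev (gradient φ v)] at h1
  have e1 : (inner ℝ (gradient φ u) (v - u) : ℝ) + (inner ℝ (gradient φ v) (u - v) : ℝ)
      = -(inner ℝ (gradient φ u - gradient φ v) (u - v) : ℝ) := by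
    have huv : u - v = -(v - u) := by abel
    rw [inner_sub_left, huv, inner_neg_right, inner_neg_right]
    ring
  have hsum := add_le_add h1 h2
  have h2q : 2 * (‖gradient φ u - gradient φ v‖ ^ 2 / (2 * M))
      ≤ (inner ℝ (gradient φ u - gradient φ v) (u - v) : ℝ) := by linarith
  have hS : ‖gradient φ u - gradient φ v‖ ^ 2
      = 2 * M * (‖gradient φ u - gradient φ v‖ ^ 2 / (2 * M)) := by field_simp
  have := mul_le_mul_of_nonneg_left h2q hM.le
  linarith

/-- Lemma 3.1: under the noise control condition with constant `c > 2`, the curvature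
pair `(s, y)` satisfies `⟨s, y⟩/⟨s, s⟩ ≥ (c/(c+2)) m` and `⟨y, y⟩/⟨s, y⟩ ≤ (c/(c−2)) M`. -/
theorem lemma_3_1
    {d : ℕ} (φ : EuclideanSpace ℝ (Fin d) → ℝ) (hφ : Differentiable ℝ φ)
    (m M : ℝ) (hm : 0 < m) (hmM : m ≤ M)
    (hconv : ∀ u v : EuclideanSpace ℝ (Fin d),
      (inner ℝ (gradient φ u - gradient φ v) (u - v) : ℝ) ≥ m * ‖u - v‖ ^ 2)
    (hlip : ∀ u v : EuclideanSpace ℝ (Fin d),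
      ‖gradient φ u - gradient φ v‖ ≤ M * ‖u - v‖)
    (g : EuclideanSpace ℝ (Fin d) → EuclideanSpace ℝ (Fin d))
    (εg : ℝ) (hεg : 0 < εg)
    (hg : ∀ x, ‖g x - gradient φ x‖ ≤ εg)
    (x s : EuclideanSpace ℝ (Fin d)) (hs : s ≠ 0)
    (y : EuclideanSpace ℝ (Fin d)) (hy : y = g (x + s) - g x)
    (c : ℝ) (hc : 2 < c)
    (hnc : (inner ℝ s y : ℝ) ≥ c * εg * ‖s‖) :
    (inner ℝ s y : ℝ) / (inner ℝ s s : ℝ) ≥ (c / (c + 2)) * m ∧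
      (inner ℝ y y : ℝ) / (inner ℝ s y : ℝ) ≤ (c / (c - 2)) * M := by
  have hM : 0 < M := lt_of_lt_of_le hm hmM
  have hmono : ∀ u v : EuclideanSpace ℝ (Fin d),
      (0:ℝ) ≤ (inner ℝ (gradient φ u - gradient φ v) (u - v) : ℝ) := fun u v =>
    le_trans (by positivity) (hconv u v)
  have hn : 0 < ‖s‖ := norm_pos_iff.2 hs
  set z : EuclideanSpace ℝ (Fin d) := gradient φ (x + s) - gradient φ x with hz
  set e : EuclideanSpace ℝ (Fin d) := y - z with he
  have hyze : y = z + e := by rw [he]; abel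
  clear_value z e
  have he2 : ‖e‖ ≤ 2 * εg := by
    have hee : e = (g (x + s) - gradient φ (x + s)) - (g x - gradient φ x) := by
      rw [he, hy, hz]; abel
    rw [hee]
    calc ‖(g (x + s) - gradient φ (x + s)) - (g x - gradient φ x)‖
        ≤ ‖g (x + s) - gradient φ (x + s)‖ + ‖g x - gradient φ x‖ := norm_sub_le _ _
      _ ≤ εg + εg := add_le_add (hg (x + s)) (hg x)
      _ = 2 * εg := by ring
  have hxs : x + s - x = s := by abel
  have hsz : m * ‖s‖ ^ 2 ≤ (inner ℝ z s : ℝ) := by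
    have := hconv (x + s) x
    rw [hxs, ← hz] at this
    exact this
  have hlipz : ‖z‖ ≤ M * ‖s‖ := by
    have := hlip (x + s) x
    rw [hxs, ← hz] at this
    exact this
  have hp0 : 0 < (inner ℝ s y : ℝ) := lt_of_lt_of_le (by positivity) hnc
  have hse : |(inner ℝ s e : ℝ)| ≤ ‖s‖ * (2 * εg) :=
    le_trans (abs_real_inner_le_norm s e) (by
      exact mul_le_mul_of_nonneg_left he2 (norm_nonneg s))
  have hsplit : (inner ℝ s y : ℝ) = (inner ℝ z s : ℝ) + (inner ℝ s e : ℝ) := by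
    rw [hyze, inner_add_right, real_inner_comm s z]
  constructor
  · -- first part
    rw [real_inner_self_eq_norm_sq, ge_iff_le, div_mul_eq_mul_div,
      div_le_div_iff₀ (by linarith) (by positivity)]
    have h1 : m * ‖s‖ ^ 2 - ‖s‖ * (2 * εg) ≤ (inner ℝ s y : ℝ) := by
      have := abs_le.1 hse
      linarith [hsz, hsplit, this.1]
    have hkey : 0 ≤ c * ((inner ℝ s y : ℝ) - (m * ‖s‖ ^ 2 - ‖s‖ * (2 * εg))) :=
      mul_nonneg (by linarith) (by linarith)
    nlinarith [hnc]
  · -- second part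
    rw [real_inner_self_eq_norm_sq, div_le_iff₀ hp0, div_mul_eq_mul_div, div_mul_eq_mul_div,
      le_div_iff₀ (by linarith : (0:ℝ) < c - 2)]
    have hco : ‖z‖ ^ 2 ≤ M * (inner ℝ z s : ℝ) := by
      have := coco φ hφ M hM hmono hlip (x + s) x
      rw [hxs, ← hz] at this
      exact this
    have hw : ‖(2:ℝ) • z - M • s‖ ≤ M * ‖s‖ := by
      have hsq : ‖(2:ℝ) • z - M • s‖ ^ 2 ≤ (M * ‖s‖) ^ 2 := by
        rw [norm_sub_sq_real, norm_smul, norm_smul, real_inner_smul_left, real_inner_smul_right,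
          Real.norm_eq_abs, Real.norm_eq_abs, abs_of_pos (by norm_num : (0:ℝ) < 2),
          abs_of_pos hM]
        nlinarith [hco]
      exact le_of_pow_le_pow_left₀ two_ne_zero (by positivity) hsq
    have key : ‖y‖ ^ 2 - M * (inner ℝ s y : ℝ)
        = (‖z‖ ^ 2 - M * (inner ℝ z s : ℝ)) + (inner ℝ ((2:ℝ) • z - M • s) e : ℝ) + ‖e‖ ^ 2 := by
      rw [hyze]
      rw [← real_inner_self_eq_norm_sq, ← real_inner_self_eq_norm_sq,
        ← real_inner_self_eq_norm_sq]
      simp only [inner_add_left, inner_add_right, inner_sub_left, real_inner_smul_left,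
        real_inner_comm e z, real_inner_comm s z, real_inner_comm e s]
      ring
    have hie : (inner ℝ ((2:ℝ) • z - M • s) e : ℝ) ≤ (M * ‖s‖) * (2 * εg) :=
      le_trans (real_inner_le_norm _ _)
        (mul_le_mul hw he2 (norm_nonneg e) (by positivity))
    have hee2 : ‖e‖ ^ 2 ≤ (2 * εg) ^ 2 := pow_le_pow_left₀ (norm_nonneg e) he2 2
    have hmain : ‖y‖ ^ 2 ≤ M * (inner ℝ s y : ℝ) + M * ‖s‖ * (2 * εg) + 4 * εg ^ 2 := by
      linarith [key, hco, hie, hee2]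
    have hyn : ‖y‖ ≤ M * ‖s‖ + 2 * εg := by
      calc ‖y‖ = ‖z + e‖ := by rw [hyze]
        _ ≤ ‖z‖ + ‖e‖ := norm_add_le _ _
        _ ≤ M * ‖s‖ + 2 * εg := add_le_add hlipz he2
    have hcy : c * εg ≤ ‖y‖ := by
      have h1 : (inner ℝ s y : ℝ) ≤ ‖s‖ * ‖y‖ := real_inner_le_norm s y
      have h2 : c * εg * ‖s‖ ≤ ‖y‖ * ‖s‖ := by
        rw [mul_comm ‖y‖ ‖s‖]; linarith
      exact le_of_mul_le_mul_right h2 hn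
    have hε2 : (c - 2) * εg ≤ M * ‖s‖ := by linarith [hcy, hyn]
    have hA : M * (c * εg * ‖s‖) ≤ M * (inner ℝ s y : ℝ) :=
      mul_le_mul_of_nonneg_left hnc hM.le
    have hB : (2 * εg) * ((c - 2) * εg) ≤ (2 * εg) * (M * ‖s‖) :=
      mul_le_mul_of_nonneg_left hε2 (by positivity)
    have hC : ‖y‖ ^ 2 * (c - 2)
        ≤ (M * (inner ℝ s y : ℝ) + M * ‖s‖ * (2 * εg) + 4 * εg ^ 2) * (c - 2) :=
      mul_le_mul_of_nonneg_right hmain (by linarith)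
    linarith [hA, hB, hC]
end

section
/- Let B be a real symmetric positive definite d × d matrix and define ψ(B) = tr(B) − log det(B). Then the condition number κ(B) = λ_max(B)/λ_min(B) satisfies κ(B) ≤ exp(ψ(B)), where λ_max(B) and λ_min(B) are the largest and smallest eigenvalues of B. -/
private lemma two_log_le_self {x : ℝ} (hx : 0 < x) : 2 * Real.log x ≤ x := by
  have h1 : Real.log (Real.sqrt x) ≤ Real.sqrt x - 1 :=
    Real.log_le_sub_one_of_pos (Real.sqrt_pos.mpr hx)
  rw [Real.log_sqrt hx.le] at h1
  nlinarith [Real.sq_sqrt hx.le, Real.sqrt_nonneg x, sq_nonneg (Real.sqrt x - 2)]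

private lemma trace_eq_sum_eigs {d : ℕ} (B : Matrix (Fin d) (Fin d) ℝ)
    (h : B.IsHermitian) : B.trace = ∑ i, h.eigenvalues i := by
  conv_lhs => rw [h.spectral_theorem]
  rw [Unitary.conjStarAlgAut_apply, Matrix.trace_mul_cycle,
    (Matrix.mem_unitaryGroup_iff').mp (Matrix.IsHermitian.eigenvectorUnitary h).2, Matrix.one_mul,
    Matrix.trace_diagonal]
  simp

/-- For a symmetric positive definite matrix `B`, the condition number
`κ(B) = λ_max(B)/λ_min(B)` is at most `exp(ψ(B))` where `ψ(B) = tr(B) − log det(B)`. -/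
theorem condition_number_le_exp_psi
    {d : ℕ} (hd : 0 < d) (B : Matrix (Fin d) (Fin d) ℝ) (hB : B.PosDef) :
    (⨆ i, hB.1.eigenvalues i) / (⨅ i, hB.1.eigenvalues i) ≤
      Real.exp (B.trace - Real.log B.det) := by
  have : Nonempty (Fin d) := ⟨⟨0, hd⟩⟩
  set lam := hB.1.eigenvalues with hlam
  have hpos : ∀ i, 0 < lam i := fun i => hB.eigenvalues_pos i
  obtain ⟨iM, hiM⟩ := Finite.exists_max lam
  obtain ⟨im, him⟩ := Finite.exists_min lam
  have hsup : (⨆ i, lam i) = lam iM :=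
    le_antisymm (ciSup_le hiM) (le_ciSup (Set.Finite.bddAbove (Set.finite_range lam)) iM)
  have hinf : (⨅ i, lam i) = lam im :=
    le_antisymm (ciInf_le (Set.Finite.bddBelow (Set.finite_range lam)) im) (le_ciInf him)
  have htr : B.trace = ∑ i, lam i := trace_eq_sum_eigs B hB.1
  have hdet : B.det = ∏ i, lam i := by
    simpa using hB.1.det_eq_prod_eigenvalues
  have hlogdet : Real.log B.det = ∑ i, Real.log (lam i) := by
    rw [hdet, Real.log_prod]
    exact fun i _ => (hpos i).ne'
  rw [hsup, hinf, htr, hlogdet, ← Finset.sum_sub_distrib]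
  have hterm : ∀ i, (1 : ℝ) ≤ lam i - Real.log (lam i) := by
    intro i
    have := Real.log_le_sub_one_of_pos (hpos i)
    linarith
  have key : Real.log (lam iM) - Real.log (lam im) ≤ ∑ i, (lam i - Real.log (lam i)) := by
    by_cases h : iM = im
    · rw [h, sub_self]
      exact Finset.sum_nonneg fun i _ => le_trans zero_le_one (hterm i)
    · have hsub : ({iM, im} : Finset (Fin d)) ⊆ Finset.univ := Finset.subset_univ _
      have hpair : ∑ i ∈ ({iM, im} : Finset (Fin d)), (lam i - Real.log (lam i))
          = (lam iM - Real.log (lam iM)) + (lam im - Real.log (lam im)) :=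
        Finset.sum_pair h
      have hle : ∑ i ∈ ({iM, im} : Finset (Fin d)), (lam i - Real.log (lam i))
          ≤ ∑ i, (lam i - Real.log (lam i)) :=
        Finset.sum_le_sum_of_subset_of_nonneg hsub
          (fun i _ _ => le_trans zero_le_one (hterm i))
      have h2 := two_log_le_self (hpos iM)
      have h3 := (hpos im).le
      rw [hpair] at hle
      linarith
  calc lam iM / lam im = Real.exp (Real.log (lam iM) - Real.log (lam im)) := by
        rw [Real.exp_sub, Real.exp_log (hpos iM), Real.exp_log (hpos im)]
    _ ≤ Real.exp (∑ i, (lam i - Real.log (lam i))) := Real.exp_le_exp.mpr key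
end

section
/- Let B be a real symmetric positive definite d × d matrix, let s, y ∈ ℝ^d with s ≠ 0 and ⟨s, y⟩ > 0, and suppose ⟨s, y⟩/⟨s, s⟩ ≥ m̂ and ⟨y, y⟩/⟨s, y⟩ ≤ M̂ for constants 0 < m̂ ≤ M̂. Define the BFGS update B⁺ = B − (B s)(B s)ᵀ/⟨s, B s⟩ + y yᵀ/⟨s, y⟩ and ψ(A) = tr(A) − log det(A). Then B⁺ is symmetric positive definite and ψ(B⁺) ≤ ψ(B) + (M̂ − log m̂). -/
open Matrix

/-- Growth bound on the potential `ψ(A) = tr(A) − log det(A)` under a BFGS update with a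
curvature pair satisfying the bounds `m̂`, `M̂` (used in the proof of Lemma 3.2). -/
theorem bfgs_update_psi_bound
    {d : ℕ} (B : Matrix (Fin d) (Fin d) ℝ) (hB : B.PosDef)
    (s y : Fin d → ℝ) (hs : s ≠ 0) (hsy : 0 < s ⬝ᵥ y)
    (mhat Mhat : ℝ) (hm : 0 < mhat) (hmM : mhat ≤ Mhat)
    (hlow : s ⬝ᵥ y / (s ⬝ᵥ s) ≥ mhat) (hup : y ⬝ᵥ y / (s ⬝ᵥ y) ≤ Mhat)
    (Bplus : Matrix (Fin d) (Fin d) ℝ)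
    (hBplus : Bplus =
      B - (s ⬝ᵥ B.mulVec s)⁻¹ • vecMulVec (B.mulVec s) (B.mulVec s) +
        (s ⬝ᵥ y)⁻¹ • vecMulVec y y) :
    Bplus.PosDef ∧
      Bplus.trace - Real.log Bplus.det ≤
        (B.trace - Real.log B.det) + (Mhat - Real.log mhat) := by
  have hBt : Bᵀ = B := hB.1
  -- symmetry of the bilinear form of `B`
  have hsymm : ∀ v w : Fin d → ℝ, v ⬝ᵥ B *ᵥ w = w ⬝ᵥ B *ᵥ v := by
    intro v w
    rw [dotProduct_mulVec, ← hBt, vecMul_transpose, dotProduct_comm, hBt]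
  set u : Fin d → ℝ := B.mulVec s with hu
  set α : ℝ := s ⬝ᵥ B.mulVec s with hα
  set β : ℝ := s ⬝ᵥ y with hβ
  have hα_pos : 0 < α := by
    have := hB.dotProduct_mulVec_pos hs
    simpa [hα] using this
  have hβ_pos : 0 < β := hsy
  have hσ_pos : 0 < s ⬝ᵥ s := by
    have := dotProduct_star_self_pos_iff (v := s)
    simpa using this.mpr hs
  set σ : ℝ := s ⬝ᵥ s with hσ
  -- mulVec of a rank-one matrix
  have hmvv : ∀ a b z : Fin d → ℝ, (vecMulVec a b) *ᵥ z = (b ⬝ᵥ z) • a := by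
    intro a b z
    ext i
    simp [mulVec, vecMulVec, dotProduct, Finset.mul_sum, mul_assoc, mul_comm, mul_left_comm]
  -- quadratic form of the update
  have hquad : ∀ x : Fin d → ℝ,
      x ⬝ᵥ Bplus *ᵥ x = x ⬝ᵥ B *ᵥ x - α⁻¹ * (x ⬝ᵥ u) ^ 2 + β⁻¹ * (x ⬝ᵥ y) ^ 2 := by
    intro x
    rw [hBplus]
    simp only [add_mulVec, sub_mulVec, smul_mulVec, hmvv, dotProduct_add, dotProduct_sub,
      dotProduct_smul, smul_eq_mul, ← hu, ← hα, ← hβ]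
    rw [dotProduct_comm u x, dotProduct_comm y x]
    ring
  -- positivity of the quadratic form, via Cauchy–Schwarz in the `B`-inner product
  have key : ∀ x : Fin d → ℝ, x ≠ 0 →
      0 < x ⬝ᵥ B *ᵥ x - α⁻¹ * (x ⬝ᵥ u) ^ 2 + β⁻¹ * (x ⬝ᵥ y) ^ 2 := by
    intro x hx
    set c : ℝ := (x ⬝ᵥ u) / α with hc
    set z : Fin d → ℝ := x - c • s with hz
    have hsBx : s ⬝ᵥ B *ᵥ x = x ⬝ᵥ u := hsymm s x
    have hzq : z ⬝ᵥ B *ᵥ z = x ⬝ᵥ B *ᵥ x - α⁻¹ * (x ⬝ᵥ u) ^ 2 := by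
      simp only [hz, mulVec_sub, mulVec_smul, dotProduct_sub, sub_dotProduct,
        dotProduct_smul, smul_dotProduct, smul_eq_mul, hsBx, ← hu, ← hα]
      rw [hc]
      field_simp
      ring
    rcases eq_or_ne z 0 with hz0 | hz0
    · -- equality case: `x` is a multiple of `s`
      have hxc : x = c • s := by
        have := sub_eq_zero.mp (hz ▸ hz0)
        exact this
      have hcne : c ≠ 0 := by
        intro h
        apply hx
        rw [hxc, h, zero_smul]
      have hfirst : x ⬝ᵥ B *ᵥ x - α⁻¹ * (x ⬝ᵥ u) ^ 2 = 0 := by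
        rw [← hzq, hz0]
        simp
      have hxy : x ⬝ᵥ y = c * β := by
        rw [hxc]
        simp [smul_dotProduct, hβ]
      rw [hfirst, hxy, zero_add]
      have : 0 < (c * β) ^ 2 := by positivity
      positivity
    · have h1 : 0 < z ⬝ᵥ B *ᵥ z := by simpa using hB.dotProduct_mulVec_pos hz0
      have h2 : 0 ≤ β⁻¹ * (x ⬝ᵥ y) ^ 2 := by positivity
      nlinarith [hzq]
  -- positive definiteness
  have hBs : ∀ i j, B j i = B i j := fun i j => congrFun (congrFun hBt i) j
  have hherm : Bplus.IsHermitian := by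
    rw [hBplus]
    ext i j
    simp only [conjTranspose_apply, Matrix.add_apply, Matrix.sub_apply, Matrix.smul_apply, vecMulVec_apply,
      smul_eq_mul, star_trivial, ← hu, ← hα, ← hβ]
    rw [hBs i j]
    ring
  have hpos : Bplus.PosDef := by
    refine Matrix.PosDef.of_dotProduct_mulVec_pos hherm fun x hx => ?_
    have := key x hx
    have hq := hquad x
    simpa [hq] using this
  refine ⟨hpos, ?_⟩
  -- trace identity
  have htrv : ∀ a b : Fin d → ℝ, (vecMulVec a b).trace = a ⬝ᵥ b := by
    intro a b
    simp [Matrix.trace, Matrix.diag, vecMulVec_apply, dotProduct]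
  have htr : Bplus.trace = B.trace - α⁻¹ * (u ⬝ᵥ u) + β⁻¹ * (y ⬝ᵥ y) := by
    rw [hBplus]
    rw [trace_add, trace_sub, trace_smul, trace_smul, htrv, htrv]
    simp [← hu, ← hα, ← hβ]
  -- determinant identity
  have hdu : IsUnit B.det := isUnit_iff_ne_zero.mpr hB.det_pos.ne'
  have hdet : Bplus.det = B.det * (α⁻¹ * β) := by
    set U : Matrix (Fin d) (Fin 2) ℝ :=
      Matrix.of fun i (l : Fin 2) => if l = 0 then u i else y i with hU
    set W : Matrix (Fin 2) (Fin d) ℝ :=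
      Matrix.of fun (j : Fin 2) i => if j = 0 then -(α⁻¹ * u i) else β⁻¹ * y i with hW
    have hBUW : Bplus = B + U * W := by
      rw [hBplus]
      ext i j
      simp only [Matrix.add_apply, Matrix.sub_apply, Matrix.smul_apply, vecMulVec_apply, smul_eq_mul,
        mul_apply, Fin.sum_univ_two, hU, hW, Matrix.of_apply, ← hu, ← hα, ← hβ]
      norm_num
      ring
    have hBinvu : B⁻¹ *ᵥ u = s := by
      rw [hu, mulVec_mulVec, Matrix.nonsing_inv_mul _ hdu, one_mulVec]
    have hBiU : B⁻¹ * U = Matrix.of fun i (l : Fin 2) => if l = 0 then s i else (B⁻¹ *ᵥ y) i := by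
      ext i l
      fin_cases l
      · have : (B⁻¹ * U) i 0 = (B⁻¹ *ᵥ u) i := by
          simp [mul_apply, mulVec, dotProduct, hU]
        simp [this, hBinvu]
      · simp [mul_apply, mulVec, dotProduct, hU]
    have hfact : Bplus.det = B.det * ((1 : Matrix (Fin 2) (Fin 2) ℝ) + W * (B⁻¹ * U)).det := by
      have h : Bplus = B * (1 + B⁻¹ * U * W) := by
        rw [hBUW, Matrix.mul_add, mul_one, ← Matrix.mul_assoc, ← Matrix.mul_assoc,
          Matrix.mul_nonsing_inv _ hdu, Matrix.one_mul]
      rw [h, det_mul, det_one_add_mul_comm]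
    have hN : (1 : Matrix (Fin 2) (Fin 2) ℝ) + W * (B⁻¹ * U) =
        !![1 - α⁻¹ * (u ⬝ᵥ s), -(α⁻¹ * (u ⬝ᵥ (B⁻¹ *ᵥ y)));
           β⁻¹ * (y ⬝ᵥ s), 1 + β⁻¹ * (y ⬝ᵥ (B⁻¹ *ᵥ y))] := by
      rw [hBiU]
      ext j l
      fin_cases j <;> fin_cases l <;>
        simp [hW, Matrix.mul_apply, Matrix.one_apply, dotProduct, Finset.mul_sum, mul_assoc,
          sub_eq_add_neg, ← Finset.sum_neg_distrib]
    have hus : u ⬝ᵥ s = α := by rw [dotProduct_comm]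
    have hys : y ⬝ᵥ s = β := by rw [dotProduct_comm]
    have huy : u ⬝ᵥ (B⁻¹ *ᵥ y) = β := by
      have h1 : u ⬝ᵥ (B⁻¹ *ᵥ y) = s ⬝ᵥ B *ᵥ (B⁻¹ *ᵥ y) := by
        rw [dotProduct_comm, hsymm]
      rw [h1, mulVec_mulVec, Matrix.mul_nonsing_inv _ hdu, one_mulVec]
    have hαne : α ≠ 0 := hα_pos.ne'
    have hβne : β ≠ 0 := hβ_pos.ne'
    rw [hfact, hN, det_fin_two_of, hus, hys, huy, inv_mul_cancel₀ hαne, inv_mul_cancel₀ hβne]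
    ring
  -- logarithms
  have hαne : α ≠ 0 := hα_pos.ne'
  have hβne : β ≠ 0 := hβ_pos.ne'
  have hdetB_pos : 0 < B.det := hB.det_pos
  have hlog : Real.log Bplus.det = Real.log B.det - Real.log α + Real.log β := by
    rw [hdet, Real.log_mul hdetB_pos.ne' (by positivity), Real.log_mul (by positivity) hβne,
      Real.log_inv]
    ring
  rw [htr, hlog]
  -- the final scalar inequality
  have h1 : β⁻¹ * (y ⬝ᵥ y) ≤ Mhat := by
    rw [inv_mul_eq_div]
    exact hup
  set t : ℝ := α / σ with ht
  have ht_pos : 0 < t := div_pos hα_pos hσ_pos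
  have hCS : α ^ 2 ≤ σ * (u ⬝ᵥ u) := by
    have := Finset.sum_mul_sq_le_sq_mul_sq Finset.univ s u
    calc α ^ 2 = (∑ i, s i * u i) ^ 2 := by rw [hα]; rfl
    _ ≤ (∑ i, s i ^ 2) * ∑ i, u i ^ 2 := this
    _ = σ * (u ⬝ᵥ u) := by rw [hσ]; simp [dotProduct, sq]
  have h2 : t ≤ α⁻¹ * (u ⬝ᵥ u) := by
    rw [ht, inv_mul_eq_div, div_le_div_iff₀ hσ_pos hα_pos]
    nlinarith [hCS]
  have hβ_ge : mhat * σ ≤ β := by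
    rw [ge_iff_le, le_div_iff₀ hσ_pos] at hlow
    exact hlow
  have h3 : Real.log α - Real.log β ≤ Real.log t - Real.log mhat := by
    have hl1 : Real.log (mhat * σ) ≤ Real.log β := Real.log_le_log (by positivity) hβ_ge
    rw [Real.log_mul hm.ne' hσ_pos.ne'] at hl1
    have hl2 : Real.log t = Real.log α - Real.log σ := Real.log_div hαne hσ_pos.ne'
    linarith
  have h4 : Real.log t ≤ t := by
    have := Real.log_le_sub_one_of_pos ht_pos
    linarith
  linarith
end

section
/- Let 0 < m̂ ≤ M̂, let δ ∈ [m̂, M̂], and let B₀ = δ I (d × d identity scaled by δ). Suppose that for i = 0, …, t−1 we are given pairs (sᵢ, yᵢ) ∈ ℝ^d × ℝ^d with sᵢ ≠ 0, ⟨sᵢ, yᵢ⟩ > 0, ⟨sᵢ, yᵢ⟩/⟨sᵢ, sᵢ⟩ ≥ m̂ and ⟨yᵢ, yᵢ⟩/⟨sᵢ, yᵢ⟩ ≤ M̂, and define B_{i+1} = Bᵢ − (Bᵢ sᵢ)(Bᵢ sᵢ)ᵀ/⟨sᵢ, Bᵢ sᵢ⟩ + yᵢ yᵢᵀ/⟨sᵢ,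 yᵢ⟩. Then every Bᵢ is symmetric positive definite and the condition number of the final matrix satisfies κ(B_t) ≤ exp[(d + t)(M̂ − log m̂)]. -/
open Matrix

namespace LBFGSAux

variable {d : ℕ}

lemma vmv_mulVec (w v x : Fin d → ℝ) : vecMulVec w v *ᵥ x = (v ⬝ᵥ x) • w := by
  ext i
  simp only [vecMulVec_apply, mulVec, dotProduct, Pi.smul_apply, smul_eq_mul, Finset.sum_mul,
    Finset.mul_sum]
  exact Finset.sum_congr rfl fun j _ => by ring

lemma trace_vmv (w v : Fin d → ℝ) : trace (vecMulVec w v) = w ⬝ᵥ v := by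
  simp [Matrix.trace, vecMulVec_apply, dotProduct, Matrix.diag]

lemma transpose_vmv (w v : Fin d → ℝ) : (vecMulVec w v)ᵀ = vecMulVec v w := by
  ext i j; simp [vecMulVec_apply, mul_comm]

lemma dot_symm {B : Matrix (Fin d) (Fin d) ℝ} (hB : Bᵀ = B) (a b : Fin d → ℝ) :
    a ⬝ᵥ B *ᵥ b = b ⬝ᵥ B *ᵥ a := by
  rw [Matrix.dotProduct_mulVec, ← Matrix.vecMul_transpose, hB, dotProduct_comm]

lemma posdef_quad {B : Matrix (Fin d) (Fin d) ℝ} (hB : B.PosDef) (x : Fin d → ℝ) (hx : x ≠ 0) :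
    0 < x ⬝ᵥ B *ᵥ x := by
  simpa using hB.dotProduct_mulVec_pos hx

lemma posdef_quad_nonneg {B : Matrix (Fin d) (Fin d) ℝ} (hB : B.PosDef) (x : Fin d → ℝ) :
    0 ≤ x ⬝ᵥ B *ᵥ x := by
  simpa using hB.posSemidef.dotProduct_mulVec_nonneg x

lemma herm_transpose {B : Matrix (Fin d) (Fin d) ℝ} (hB : B.IsHermitian) : Bᵀ = B := by
  simpa [Matrix.IsHermitian, Matrix.conjTranspose_eq_transpose_of_trivial] using hB

/-- the BFGS update -/
noncomputable def upd (B : Matrix (Fin d) (Fin d) ℝ) (s y : Fin d → ℝ) :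
    Matrix (Fin d) (Fin d) ℝ :=
  B - (s ⬝ᵥ B *ᵥ s)⁻¹ • vecMulVec (B *ᵥ s) (B *ᵥ s) + (s ⬝ᵥ y)⁻¹ • vecMulVec y y

lemma upd_quad (B : Matrix (Fin d) (Fin d) ℝ) (s y x : Fin d → ℝ) :
    x ⬝ᵥ (upd B s y) *ᵥ x =
      x ⬝ᵥ B *ᵥ x - (s ⬝ᵥ B *ᵥ s)⁻¹ * ((B *ᵥ s) ⬝ᵥ x) ^ 2 + (s ⬝ᵥ y)⁻¹ * (y ⬝ᵥ x) ^ 2 := by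
  simp only [upd, sub_mulVec, add_mulVec, smul_mulVec, vmv_mulVec, dotProduct_sub,
    dotProduct_add, dotProduct_smul, smul_eq_mul, smul_smul]
  rw [dotProduct_comm x (B *ᵥ s), dotProduct_comm x y]
  ring

lemma upd_isHermitian {B : Matrix (Fin d) (Fin d) ℝ} (hB : B.IsHermitian) (s y : Fin d → ℝ) :
    (upd B s y).IsHermitian := by
  have hBt := herm_transpose hB
  rw [Matrix.IsHermitian, Matrix.conjTranspose_eq_transpose_of_trivial, upd, transpose_add,
    transpose_sub, transpose_smul, transpose_smul, transpose_vmv, transpose_vmv, hBt]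

lemma upd_posDef {B : Matrix (Fin d) (Fin d) ℝ} (hB : B.PosDef) {s y : Fin d → ℝ}
    (hs : s ≠ 0) (hsy : 0 < s ⬝ᵥ y) : (upd B s y).PosDef := by
  have hBt := herm_transpose hB.1
  set σ := s ⬝ᵥ B *ᵥ s with hσdef
  have hσ : 0 < σ := posdef_quad hB s hs
  refine Matrix.PosDef.of_dotProduct_mulVec_pos (upd_isHermitian hB.1 s y) fun x hx => ?_
  have hquad := upd_quad B s y x
  set u := B *ᵥ s with hu
  set q := u ⬝ᵥ x with hq
  set w := x - (σ⁻¹ * q) • s with hw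
  have key : x ⬝ᵥ B *ᵥ x - σ⁻¹ * q ^ 2 = w ⬝ᵥ B *ᵥ w := by
    have h1 : s ⬝ᵥ B *ᵥ x = q := by
      rw [dot_symm hBt s x, ← hu, dotProduct_comm x u, hq]
    have h2 : x ⬝ᵥ B *ᵥ s = q := by rw [← hu, dotProduct_comm x u, hq]
    rw [hw]
    simp only [sub_dotProduct, smul_dotProduct, mulVec_sub, mulVec_smul, dotProduct_sub,
      dotProduct_smul, smul_eq_mul, h1, h2, ← hσdef]
    field_simp
    ring
  simp only [star_trivial]
  rw [hquad, ← hσdef, key]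
  rcases eq_or_ne w 0 with hw0 | hw0
  · have hxs : x = (σ⁻¹ * q) • s := sub_eq_zero.mp hw0
    have hc : σ⁻¹ * q ≠ 0 := by
      intro hc
      exact hx (by rw [hxs, hc, zero_smul])
    have hyx : y ⬝ᵥ x ≠ 0 := by
      rw [hxs, dotProduct_smul, smul_eq_mul, dotProduct_comm y s]
      exact mul_ne_zero hc (ne_of_gt hsy)
    have h2 : 0 < (s ⬝ᵥ y)⁻¹ * (y ⬝ᵥ x) ^ 2 := by positivity
    rw [hw0]
    simpa using h2
  · have h1 : 0 < w ⬝ᵥ B *ᵥ w := posdef_quad hB w hw0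
    have h2 : 0 ≤ (s ⬝ᵥ y)⁻¹ * (y ⬝ᵥ x) ^ 2 := by positivity
    linarith


lemma upd_trace (B : Matrix (Fin d) (Fin d) ℝ) (s y : Fin d → ℝ) :
    trace (upd B s y) =
      trace B - (s ⬝ᵥ B *ᵥ s)⁻¹ * ((B *ᵥ s) ⬝ᵥ (B *ᵥ s)) + (s ⬝ᵥ y)⁻¹ * (y ⬝ᵥ y) := by
  simp [upd, trace_add, trace_sub, trace_smul, trace_vmv, smul_eq_mul]

lemma upd_det {B : Matrix (Fin d) (Fin d) ℝ} (hB : B.PosDef) {s y : Fin d → ℝ}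
    (hs : s ≠ 0) (hsy : 0 < s ⬝ᵥ y) :
    det (upd B s y) = det B * ((s ⬝ᵥ y) / (s ⬝ᵥ B *ᵥ s)) := by
  have hBt := herm_transpose hB.1
  have hdet : IsUnit B.det := isUnit_iff_ne_zero.mpr (ne_of_gt hB.det_pos)
  set σ := s ⬝ᵥ B *ᵥ s with hσdef
  have hσ : 0 < σ := posdef_quad hB s hs
  set ρ := s ⬝ᵥ y with hρdef
  have hBz : B *ᵥ (B⁻¹ *ᵥ y) = y := by
    rw [mulVec_mulVec, Matrix.mul_nonsing_inv _ hdet, one_mulVec]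
  set u := B *ᵥ s with hu
  set C : Matrix (Fin d) (Fin 2) ℝ :=
    Matrix.of fun i k => ![-σ⁻¹ * s i, ρ⁻¹ * (B⁻¹ *ᵥ y) i] k with hC
  set R : Matrix (Fin 2) (Fin d) ℝ := Matrix.of ![u, y] with hR
  have hBC : B * C = Matrix.of fun i k => ![-σ⁻¹ * u i, ρ⁻¹ * y i] k := by
    ext i k
    have h1 : (B *ᵥ ((σ⁻¹) • s)) i = σ⁻¹ * u i := by rw [mulVec_smul, hu]; simp
    have h2 : (B *ᵥ ((ρ⁻¹) • (B⁻¹ *ᵥ y))) i = ρ⁻¹ * y i := by rw [mulVec_smul, hBz]; simp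
    fin_cases k
    · calc (B * C) i 0 = -(B *ᵥ ((σ⁻¹) • s)) i := by
            simp [hC, Matrix.mul_apply, mulVec, dotProduct, Finset.mul_sum]
        _ = _ := by rw [h1]; simp [hC]
    · calc (B * C) i 1 = (B *ᵥ ((ρ⁻¹) • (B⁻¹ *ᵥ y))) i := by
            simp [hC, Matrix.mul_apply, mulVec, dotProduct, Finset.mul_sum]
        _ = _ := by rw [h2]; simp [hC]
  have hfac : upd B s y = B * (1 + C * R) := by
    rw [Matrix.mul_add, Matrix.mul_one, ← Matrix.mul_assoc, hBC, upd]
    ext i j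
    simp [Matrix.mul_apply, Fin.sum_univ_two, hR, vecMulVec_apply, smul_eq_mul]
    ring
  have dotsimp : ∀ (c : ℝ) (v w : Fin d → ℝ), (∑ i, v i * (c * w i)) = c * (v ⬝ᵥ w) := by
    intro c v w
    rw [dotProduct, Finset.mul_sum]
    exact Finset.sum_congr rfl fun j _ => by ring
  have hus : u ⬝ᵥ s = σ := by rw [dotProduct_comm, hσdef, hu]
  have huz : u ⬝ᵥ (B⁻¹ *ᵥ y) = ρ := by
    rw [hu, dotProduct_comm, dot_symm hBt, hBz, hρdef]
  have hys : y ⬝ᵥ s = ρ := by rw [dotProduct_comm, hρdef]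
  have hRC : det ((1 : Matrix (Fin 2) (Fin 2) ℝ) + R * C) = ρ / σ := by
    have e00 : ((1 : Matrix (Fin 2) (Fin 2) ℝ) + R * C) 0 0 = 0 := by
      rw [Matrix.add_apply, Matrix.one_apply_eq, Matrix.mul_apply]
      have h : ∑ i, R 0 i * C i 0 = -(σ⁻¹ * (u ⬝ᵥ s)) := by
        rw [dotProduct, Finset.mul_sum, ← Finset.sum_neg_distrib]
        exact Finset.sum_congr rfl fun i _ => by simp [hR, hC]; ring
      rw [h, hus, inv_mul_cancel₀ (ne_of_gt hσ)]
      ring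
    have e01 : ((1 : Matrix (Fin 2) (Fin 2) ℝ) + R * C) 0 1 = 1 := by
      rw [Matrix.add_apply, Matrix.mul_apply]
      have h : ∑ i, R 0 i * C i 1 = ρ⁻¹ * (u ⬝ᵥ (B⁻¹ *ᵥ y)) := by
        rw [dotProduct, Finset.mul_sum]
        exact Finset.sum_congr rfl fun i _ => by simp [hR, hC]; ring
      rw [h, huz, inv_mul_cancel₀ (ne_of_gt hsy)]
      simp [Matrix.one_apply]
    have e10 : ((1 : Matrix (Fin 2) (Fin 2) ℝ) + R * C) 1 0 = -σ⁻¹ * ρ := by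
      rw [Matrix.add_apply, Matrix.mul_apply]
      have h : ∑ i, R 1 i * C i 0 = -(σ⁻¹ * (y ⬝ᵥ s)) := by
        rw [dotProduct, Finset.mul_sum, ← Finset.sum_neg_distrib]
        exact Finset.sum_congr rfl fun i _ => by simp [hR, hC]; ring
      rw [h, hys]
      simp [Matrix.one_apply]
    rw [Matrix.det_fin_two, e00, e01, e10]
    ring_nf
  rw [hfac, det_mul, Matrix.det_one_add_mul_comm, hRC]


lemma dot_self_pos {v : Fin d → ℝ} (hv : v ≠ 0) : 0 < v ⬝ᵥ v := by
  have h0 : v ⬝ᵥ v ≠ 0 := fun h => hv (dotProduct_self_eq_zero.mp h)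
  have h1 : 0 ≤ v ⬝ᵥ v := Finset.sum_nonneg fun i _ => mul_self_nonneg _
  exact lt_of_le_of_ne h1 (Ne.symm h0)

lemma two_log_le {x : ℝ} (hx : 0 < x) : 2 * Real.log x ≤ x := by
  have h1 : Real.log (Real.sqrt x) ≤ Real.sqrt x - 1 :=
    Real.log_le_sub_one_of_pos (Real.sqrt_pos.mpr hx)
  have h2 : Real.log (Real.sqrt x) = Real.log x / 2 := Real.log_sqrt hx.le
  nlinarith [Real.sq_sqrt hx.le, sq_nonneg (Real.sqrt x - 2)]

lemma log_ratio_le_sum {n : ℕ} (lam : Fin n → ℝ) (hpos : ∀ k, 0 < lam k) (i j : Fin n) :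
    Real.log (lam i) - Real.log (lam j) ≤ ∑ k, (lam k - Real.log (lam k)) := by
  have hterm : ∀ k, (0:ℝ) ≤ lam k - Real.log (lam k) := fun k => by
    have := Real.log_le_sub_one_of_pos (hpos k); linarith
  rcases eq_or_ne i j with rfl | hne
  · simpa using Finset.sum_nonneg fun k _ => hterm k
  · have h2 : (lam i - Real.log (lam i)) + (lam j - Real.log (lam j)) ≤
        ∑ k, (lam k - Real.log (lam k)) := by
      have hsub := Finset.sum_le_sum_of_subset_of_nonneg (f := fun k => lam k - Real.log (lam k))
        (Finset.subset_univ ({i, j} : Finset (Fin n))) fun k _ _ => hterm k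
      rwa [Finset.sum_pair hne] at hsub
    have h3 : 2 * Real.log (lam i) ≤ lam i := two_log_le (hpos i)
    have h4 : 0 < lam j := hpos j
    linarith

lemma trace_eq_sum_eig {n : Type*} [Fintype n] [DecidableEq n] {A : Matrix n n ℝ}
    (hA : A.IsHermitian) : trace A = ∑ i, hA.eigenvalues i := by
  simpa using hA.trace_eq_sum_eigenvalues

lemma eig_ratio {n : ℕ} (hn : 0 < n) {A : Matrix (Fin n) (Fin n) ℝ} (hA : A.PosDef)
    {K : ℝ} (hK : trace A - Real.log (det A) ≤ K) (h : A.IsHermitian) :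
    (⨆ j, h.eigenvalues j) / (⨅ j, h.eigenvalues j) ≤ Real.exp K := by
  haveI : Nonempty (Fin n) := ⟨⟨0, hn⟩⟩
  set lam := h.eigenvalues with hlam
  have hpos : ∀ k, 0 < lam k := fun k => hA.eigenvalues_pos k
  have htr : trace A = ∑ i, lam i := trace_eq_sum_eig h
  have hdet : det A = ∏ i, lam i := by
    have := h.det_eq_prod_eigenvalues
    simpa using this
  have hlogdet : Real.log (det A) = ∑ i, Real.log (lam i) := by
    rw [hdet, Real.log_prod fun i _ => ne_of_gt (hpos i)]
  have hψ : ∑ k, (lam k - Real.log (lam k)) ≤ K := by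
    rw [Finset.sum_sub_distrib, ← htr, ← hlogdet]
    exact hK
  obtain ⟨i0, hi0⟩ := Finite.exists_max lam
  obtain ⟨j0, hj0⟩ := Finite.exists_min lam
  have hsup : (⨆ j, lam j) = lam i0 :=
    le_antisymm (ciSup_le hi0) (le_ciSup (Set.Finite.bddAbove (Set.finite_range _)) i0)
  have hinf : (⨅ j, lam j) = lam j0 :=
    le_antisymm (ciInf_le (Set.Finite.bddBelow (Set.finite_range _)) j0) (le_ciInf hj0)
  rw [hsup, hinf]
  have hlog : Real.log (lam i0) - Real.log (lam j0) ≤ K :=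
    le_trans (log_ratio_le_sum lam hpos i0 j0) hψ
  have heq : lam i0 / lam j0 = Real.exp (Real.log (lam i0) - Real.log (lam j0)) := by
    rw [Real.exp_sub, Real.exp_log (hpos i0), Real.exp_log (hpos j0)]
  rw [heq]
  exact Real.exp_le_exp.mpr hlog

lemma upd_psi {B : Matrix (Fin d) (Fin d) ℝ} (hB : B.PosDef) {s y : Fin d → ℝ} {mh Mh : ℝ}
    (hm : 0 < mh) (hs : s ≠ 0) (hsy : 0 < s ⬝ᵥ y)
    (hlow : s ⬝ᵥ y / (s ⬝ᵥ s) ≥ mh) (hup : y ⬝ᵥ y / (s ⬝ᵥ y) ≤ Mh) :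
    trace (upd B s y) - Real.log (det (upd B s y)) ≤
      trace B - Real.log (det B) + (Mh - Real.log mh) := by
  have hBt := herm_transpose hB.1
  set σ := s ⬝ᵥ B *ᵥ s with hσdef
  have hσ : 0 < σ := posdef_quad hB s hs
  set ρ := s ⬝ᵥ y with hρdef
  set u := B *ᵥ s with hu
  have hss : 0 < s ⬝ᵥ s := dot_self_pos hs
  have huu : 0 ≤ u ⬝ᵥ u := Finset.sum_nonneg fun i _ => mul_self_nonneg _
  have hCS : σ ^ 2 ≤ (s ⬝ᵥ s) * (u ⬝ᵥ u) := by
    have := Finset.sum_mul_sq_le_sq_mul_sq Finset.univ s u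
    have e1 : σ = ∑ i, s i * u i := by rw [hσdef, hu]; rfl
    have e2 : s ⬝ᵥ s = ∑ i, s i ^ 2 := by
      simp [dotProduct, sq]
    have e3 : u ⬝ᵥ u = ∑ i, u i ^ 2 := by
      simp [dotProduct, sq]
    rw [e1, e2, e3]
    exact this
  have hdiv : σ / (s ⬝ᵥ s) ≤ (u ⬝ᵥ u) / σ := by
    rw [div_le_div_iff₀ hss hσ]
    nlinarith
  have hlog1 : Real.log σ - Real.log (s ⬝ᵥ s) ≤ σ / (s ⬝ᵥ s) - 1 := by
    have := Real.log_le_sub_one_of_pos (div_pos hσ hss)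
    rwa [Real.log_div (ne_of_gt hσ) (ne_of_gt hss)] at this
  have hlog2 : Real.log mh ≤ Real.log ρ - Real.log (s ⬝ᵥ s) := by
    have h1 : Real.log mh ≤ Real.log (ρ / (s ⬝ᵥ s)) :=
      (Real.log_le_log_iff hm (div_pos hsy hss)).mpr hlow
    rwa [Real.log_div (ne_of_gt hsy) (ne_of_gt hss)] at h1
  have htrace := upd_trace B s y
  have hdet := upd_det hB hs hsy
  have hlogdet : Real.log (det (upd B s y)) =
      Real.log (det B) + Real.log ρ - Real.log σ := by
    rw [hdet, Real.log_mul (ne_of_gt hB.det_pos) (ne_of_gt (div_pos hsy hσ)),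
      Real.log_div (ne_of_gt hsy) (ne_of_gt hσ)]
    ring
  have hMh : ρ⁻¹ * (y ⬝ᵥ y) ≤ Mh := by
    rw [inv_mul_eq_div]
    exact hup
  have hσu : σ⁻¹ * (u ⬝ᵥ u) = (u ⬝ᵥ u) / σ := by rw [inv_mul_eq_div]
  rw [htrace, hlogdet, ← hσdef, ← hρdef, ← hu, hσu]
  have hssσ : σ / (s ⬝ᵥ s) ≤ (u ⬝ᵥ u) / σ := hdiv
  linarith

end LBFGSAux


open LBFGSAux in
/-- Condition number bound on the L-BFGS matrix `B_t` built from the scaled identity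
`B₀ = δ I` by `t` BFGS updates whose curvature pairs satisfy the bounds `m̂`, `M̂`
(key estimate in the L-BFGS case of Lemma 3.2). -/
theorem lbfgs_condition_number_bound
    {d : ℕ} (hd : 0 < d) (t : ℕ)
    (mhat Mhat δ : ℝ) (hm : 0 < mhat) (hmM : mhat ≤ Mhat)
    (hδl : mhat ≤ δ) (hδu : δ ≤ Mhat)
    (B : ℕ → Matrix (Fin d) (Fin d) ℝ)
    (hB0 : B 0 = δ • (1 : Matrix (Fin d) (Fin d) ℝ))
    (s y : ℕ → Fin d → ℝ)
    (hs : ∀ i < t, s i ≠ 0)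
    (hsy : ∀ i < t, 0 < s i ⬝ᵥ y i)
    (hlow : ∀ i < t, s i ⬝ᵥ y i / (s i ⬝ᵥ s i) ≥ mhat)
    (hup : ∀ i < t, y i ⬝ᵥ y i / (s i ⬝ᵥ y i) ≤ Mhat)
    (hupd : ∀ i < t, B (i + 1) =
      B i - (s i ⬝ᵥ (B i).mulVec (s i))⁻¹ •
          vecMulVec ((B i).mulVec (s i)) ((B i).mulVec (s i)) +
        (s i ⬝ᵥ y i)⁻¹ • vecMulVec (y i) (y i)) :
    (∀ i ≤ t, (B i).PosDef) ∧
      ∀ h : (B t).IsHermitian,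
        (⨆ j, h.eigenvalues j) / (⨅ j, h.eigenvalues j) ≤
          Real.exp (((d : ℝ) + t) * (Mhat - Real.log mhat)) := by
  have hδ0 : 0 < δ := lt_of_lt_of_le hm hδl
  have main : ∀ i, i ≤ t → (B i).PosDef ∧
      trace (B i) - Real.log (det (B i)) ≤ ((d : ℝ) + i) * (Mhat - Real.log mhat) := by
    intro i
    induction i with
    | zero =>
      intro _
      have hpd : (B 0).PosDef := by
        rw [hB0]
        refine Matrix.PosDef.of_dotProduct_mulVec_pos ?_ fun x hx => ?_
        · rw [Matrix.IsHermitian, Matrix.conjTranspose_eq_transpose_of_trivial,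
            Matrix.transpose_smul, Matrix.transpose_one]
        · have : x ⬝ᵥ (δ • (1 : Matrix (Fin d) (Fin d) ℝ)) *ᵥ x = δ * (x ⬝ᵥ x) := by
            rw [Matrix.smul_mulVec, Matrix.one_mulVec, dotProduct_smul, smul_eq_mul]
          simp only [star_trivial]
          rw [this]
          exact mul_pos hδ0 (dot_self_pos hx)
      refine ⟨hpd, ?_⟩
      have htr : trace (B 0) = (d : ℝ) * δ := by
        rw [hB0, Matrix.trace_smul, Matrix.trace_one, smul_eq_mul]
        simp [mul_comm]
      have hdet : det (B 0) = δ ^ d := by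
        rw [hB0, Matrix.det_smul, Matrix.det_one]
        simp
      rw [htr, hdet, Real.log_pow]
      have h1 : Real.log mhat ≤ Real.log δ := (Real.log_le_log_iff hm hδ0).mpr hδl
      have h2 : (0:ℝ) ≤ (d:ℝ) := Nat.cast_nonneg d
      have h3 : δ - Real.log δ ≤ Mhat - Real.log mhat := by linarith
      have := mul_le_mul_of_nonneg_left h3 h2
      push_cast
      nlinarith
    | succ n ih =>
      intro hn1
      have hnt : n < t := hn1
      obtain ⟨hpd, hψ⟩ := ih (le_of_lt hnt)
      have hB1 : B (n + 1) = upd (B n) (s n) (y n) := hupd n hnt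
      have hpd1 : (B (n + 1)).PosDef := by
        rw [hB1]; exact upd_posDef hpd (hs n hnt) (hsy n hnt)
      refine ⟨hpd1, ?_⟩
      have hstep := upd_psi hpd hm (hs n hnt) (hsy n hnt) (hlow n hnt) (hup n hnt)
      rw [hB1]
      calc trace (upd (B n) (s n) (y n)) - Real.log (det (upd (B n) (s n) (y n)))
          ≤ trace (B n) - Real.log (det (B n)) + (Mhat - Real.log mhat) := hstep
        _ ≤ ((d : ℝ) + n) * (Mhat - Real.log mhat) + (Mhat - Real.log mhat) := by linarith
        _ = ((d : ℝ) + ((n + 1 : ℕ) : ℝ)) * (Mhat - Real.log mhat) := by push_cast; ring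
  refine ⟨fun i hi => (main i hi).1, fun h => ?_⟩
  exact eig_ratio hd (main t le_rfl).1 (main t le_rfl).2 h
end

section
/- (Lemma 3.2, L-BFGS case) Let 0 < m̂ ≤ M̂, let δ ∈ [m̂, M̂], let B₀ = δ I (d × d), and for i = 0, …, t−1 let (sᵢ, yᵢ) ∈ ℝ^d × ℝ^d satisfy sᵢ ≠ 0, ⟨sᵢ, yᵢ⟩ > 0, ⟨sᵢ, yᵢ⟩/⟨sᵢ, sᵢ⟩ ≥ m̂ and ⟨yᵢ, yᵢ⟩/⟨sᵢ, yᵢ⟩ ≤ M̂, with B_{i+1} = Bᵢ − (Bᵢ sᵢ)(Bᵢ sᵢ)ᵀ/⟨sᵢ, Bᵢ sᵢ⟩ + yᵢ yᵢᵀ/⟨sᵢ, yᵢ⟩. Let H = B_t⁻¹. Then for every g ∈ ℝ^d with g ≠ 0, the angle θ between H g and g satisfies cos θ = ⟨g, H g⟩/(‖g‖ · ‖H g‖) ≥ exp[−(d + t)(M̂ − log m̂)]. -/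
open Matrix


lemma log_le_half (x : ℝ) (hx : 0 < x) : Real.log x ≤ x / 2 := by
  have h1 : Real.log (Real.sqrt x) ≤ Real.sqrt x - 1 :=
    Real.log_le_sub_one_of_pos (Real.sqrt_pos.mpr hx)
  have h2 : Real.log (Real.sqrt x) = Real.log x / 2 := Real.log_sqrt hx.le
  have h3 : Real.sqrt x ^ 2 = x := Real.sq_sqrt hx.le
  nlinarith [sq_nonneg (Real.sqrt x - 2)]

section
variable {d : ℕ}

lemma herm_dot_symm {A : Matrix (Fin d) (Fin d) ℝ} (hA : A.IsHermitian)
    (u v : Fin d → ℝ) : u ⬝ᵥ (A *ᵥ v) = v ⬝ᵥ (A *ᵥ u) := by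
  have hAt : Aᵀ = A := by
    ext i j
    simpa using (congrFun (congrFun hA j) i).symm
  rw [Matrix.dotProduct_mulVec, ← Matrix.mulVec_transpose, hAt, dotProduct_comm]

lemma psd_cs {A : Matrix (Fin d) (Fin d) ℝ} (hA : A.PosSemidef) (x u : Fin d → ℝ) :
    (x ⬝ᵥ (A *ᵥ u)) ^ 2 ≤ (x ⬝ᵥ (A *ᵥ x)) * (u ⬝ᵥ (A *ᵥ u)) := by
  have key : ∀ r : ℝ, 0 ≤ (u ⬝ᵥ (A *ᵥ u)) * (r * r) + (2 * (x ⬝ᵥ (A *ᵥ u))) * r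
      + (x ⬝ᵥ (A *ᵥ x)) := by
    intro r
    have h0 := hA.dotProduct_mulVec_nonneg (x + r • u)
    rw [star_trivial] at h0
    have hexp : (x + r • u) ⬝ᵥ (A *ᵥ (x + r • u)) =
        (u ⬝ᵥ (A *ᵥ u)) * (r * r) + (2 * (x ⬝ᵥ (A *ᵥ u))) * r + (x ⬝ᵥ (A *ᵥ x)) := by
      have hsymm := herm_dot_symm hA.1 u x
      rw [Matrix.mulVec_add, Matrix.mulVec_smul, add_dotProduct,
        smul_dotProduct, dotProduct_add, dotProduct_add,
        dotProduct_smul, dotProduct_smul]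
      simp only [smul_eq_mul]
      rw [hsymm]; ring
    linarith [hexp ▸ h0]
  have hd := discrim_le_zero key
  rw [discrim] at hd
  nlinarith

lemma dot_cs (x u : Fin d → ℝ) : (x ⬝ᵥ u) ^ 2 ≤ (x ⬝ᵥ x) * (u ⬝ᵥ u) := by
  have := psd_cs (Matrix.PosSemidef.one (n := Fin d) (R := ℝ)) x u
  simpa using this


lemma vecMulVec_mulVec' (u v x : Fin d → ℝ) :
    (vecMulVec u v) *ᵥ x = (v ⬝ᵥ x) • u := by
  ext i
  simp only [vecMulVec, mulVec, dotProduct, Pi.smul_apply, smul_eq_mul, Matrix.of_apply]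
  rw [Finset.sum_mul]
  exact Finset.sum_congr rfl fun j _ => by ring

lemma trace_vecMulVec' (u v : Fin d → ℝ) :
    trace (vecMulVec u v) = u ⬝ᵥ v := by
  simp [Matrix.trace, vecMulVec, Matrix.diag, dotProduct]

lemma isHermitian_vecMulVec' (u : Fin d → ℝ) : (vecMulVec u u).IsHermitian := by
  ext i j
  simp [vecMulVec, conjTranspose, Matrix.transpose, mul_comm]

/-- quadratic form of the BFGS update -/
lemma quad_update (Bi : Matrix (Fin d) (Fin d) ℝ) (ss yy x : Fin d → ℝ) :
    x ⬝ᵥ ((Bi - (ss ⬝ᵥ Bi *ᵥ ss)⁻¹ • vecMulVec (Bi *ᵥ ss) (Bi *ᵥ ss)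
        + (ss ⬝ᵥ yy)⁻¹ • vecMulVec yy yy) *ᵥ x)
      = x ⬝ᵥ (Bi *ᵥ x) - (ss ⬝ᵥ Bi *ᵥ ss)⁻¹ * (x ⬝ᵥ (Bi *ᵥ ss)) ^ 2
        + (ss ⬝ᵥ yy)⁻¹ * (x ⬝ᵥ yy) ^ 2 := by
  rw [Matrix.add_mulVec, Matrix.sub_mulVec, Matrix.smul_mulVec,
    Matrix.smul_mulVec, vecMulVec_mulVec', vecMulVec_mulVec',
    dotProduct_add, dotProduct_sub, dotProduct_smul,
    dotProduct_smul, dotProduct_smul, dotProduct_smul]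
  have h1 : (Bi *ᵥ ss) ⬝ᵥ x = x ⬝ᵥ (Bi *ᵥ ss) := dotProduct_comm _ _
  have h2 : yy ⬝ᵥ x = x ⬝ᵥ yy := dotProduct_comm _ _
  rw [h1, h2]
  simp only [smul_eq_mul]
  ring


lemma isHermitian_smul_real {A : Matrix (Fin d) (Fin d) ℝ} (h : A.IsHermitian) (c : ℝ) :
    (c • A).IsHermitian := by
  unfold Matrix.IsHermitian at *
  rw [Matrix.conjTranspose_smul, h, star_trivial]

lemma isHermitian_update {Bi : Matrix (Fin d) (Fin d) ℝ} (hBi : Bi.IsHermitian)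
    (ss yy : Fin d → ℝ) :
    (Bi - (ss ⬝ᵥ Bi *ᵥ ss)⁻¹ • vecMulVec (Bi *ᵥ ss) (Bi *ᵥ ss)
      + (ss ⬝ᵥ yy)⁻¹ • vecMulVec yy yy).IsHermitian :=
  ((hBi.sub (isHermitian_smul_real (isHermitian_vecMulVec' _) _)).add
    (isHermitian_smul_real (isHermitian_vecMulVec' _) _))

lemma posDef_update {Bi : Matrix (Fin d) (Fin d) ℝ} (hBi : Bi.PosDef)
    {ss yy : Fin d → ℝ} (hss : ss ≠ 0) (hσ : 0 < ss ⬝ᵥ yy) :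
    (Bi - (ss ⬝ᵥ Bi *ᵥ ss)⁻¹ • vecMulVec (Bi *ᵥ ss) (Bi *ᵥ ss)
      + (ss ⬝ᵥ yy)⁻¹ • vecMulVec yy yy).PosDef := by
  have hτ : 0 < ss ⬝ᵥ Bi *ᵥ ss := by
    have := hBi.dotProduct_mulVec_pos hss
    rwa [star_trivial] at this
  refine Matrix.PosDef.of_dotProduct_mulVec_pos (isHermitian_update hBi.1 ss yy) fun x hx => ?_
  rw [star_trivial, quad_update]
  set τ := ss ⬝ᵥ Bi *ᵥ ss with hτdef
  set q := x ⬝ᵥ Bi *ᵥ x with hq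
  set r := x ⬝ᵥ Bi *ᵥ ss with hr
  have hcs : r ^ 2 ≤ q * τ := psd_cs hBi.posSemidef x ss
  have hq0 : 0 < q := by
    have := hBi.dotProduct_mulVec_pos hx
    rwa [star_trivial] at this
  rcases eq_or_ne (x ⬝ᵥ yy) 0 with hw | hw
  · -- need strict inequality r^2 < q*τ
    have hstrict : r ^ 2 < q * τ := by
      rcases lt_or_eq_of_le hcs with h | h
      · exact h
      · exfalso
        -- equality case: x = (r/τ) • ss
        set x' := x - (r / τ) • ss with hx'
        have hx'0 : x' ⬝ᵥ Bi *ᵥ x' = 0 := by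
          have hsymm : ss ⬝ᵥ Bi *ᵥ x = x ⬝ᵥ Bi *ᵥ ss := herm_dot_symm hBi.1 ss x
          rw [hx']
          rw [Matrix.mulVec_sub, Matrix.mulVec_smul, sub_dotProduct,
            smul_dotProduct, dotProduct_sub, dotProduct_sub,
            dotProduct_smul, dotProduct_smul]
          simp only [smul_eq_mul]
          rw [hsymm]
          field_simp
          nlinarith [h]
        have hx'z : x' = 0 := by
          by_contra hne
          exact absurd hx'0 (ne_of_gt (by simpa [star_trivial] using hBi.dotProduct_mulVec_pos hne))
        have hxeq : x = (r / τ) • ss := by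
          have := sub_eq_zero.mp hx'z
          simpa [hx'] using this
        have hwval : x ⬝ᵥ yy = (r / τ) * (ss ⬝ᵥ yy) := by
          rw [hxeq, smul_dotProduct, smul_eq_mul]
        have hr0 : r = 0 := by
          rw [hwval] at hw
          have h' := (mul_eq_zero.mp hw).resolve_right (ne_of_gt hσ)
          rcases div_eq_zero_iff.mp h' with h'' | h''
          · exact h''
          · exact absurd h'' (ne_of_gt hτ)
        have : x = 0 := by rw [hxeq, hr0]; simp
        exact hx this
    have h1 : 0 < q - τ⁻¹ * r ^ 2 := by
      rw [sub_pos]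
      calc τ⁻¹ * r ^ 2 < τ⁻¹ * (q * τ) := by
            apply mul_lt_mul_of_pos_left hstrict (inv_pos.mpr hτ)
        _ = q := by field_simp
    rw [hw]
    simpa using h1
  · have h1 : 0 ≤ q - τ⁻¹ * r ^ 2 := by
      rw [sub_nonneg]
      calc τ⁻¹ * r ^ 2 ≤ τ⁻¹ * (q * τ) := by
            apply mul_le_mul_of_nonneg_left hcs (inv_nonneg.mpr hτ.le)
        _ = q := by field_simp
    have h2 : 0 < (ss ⬝ᵥ yy)⁻¹ * (x ⬝ᵥ yy) ^ 2 :=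
      mul_pos (inv_pos.mpr hσ) (by positivity)
    linarith

lemma trace_update (Bi : Matrix (Fin d) (Fin d) ℝ) (ss yy : Fin d → ℝ) :
    trace (Bi - (ss ⬝ᵥ Bi *ᵥ ss)⁻¹ • vecMulVec (Bi *ᵥ ss) (Bi *ᵥ ss)
      + (ss ⬝ᵥ yy)⁻¹ • vecMulVec yy yy)
    = trace Bi - (ss ⬝ᵥ Bi *ᵥ ss)⁻¹ * ((Bi *ᵥ ss) ⬝ᵥ (Bi *ᵥ ss))
      + (ss ⬝ᵥ yy)⁻¹ * (yy ⬝ᵥ yy) := by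
  rw [Matrix.trace_add, Matrix.trace_sub, Matrix.trace_smul, Matrix.trace_smul,
    trace_vecMulVec', trace_vecMulVec']
  simp [smul_eq_mul]


lemma sum_mul_left (c : ℝ) (a b : Fin d → ℝ) :
    ∑ i, (c * a i) * b i = c * (a ⬝ᵥ b) := by
  simp [dotProduct, Finset.mul_sum, mul_assoc]

lemma det_update {Bi : Matrix (Fin d) (Fin d) ℝ} (hBi : Bi.PosDef)
    {ss yy : Fin d → ℝ} (hss : ss ≠ 0) (hσ : 0 < ss ⬝ᵥ yy) :
    det (Bi - (ss ⬝ᵥ Bi *ᵥ ss)⁻¹ • vecMulVec (Bi *ᵥ ss) (Bi *ᵥ ss)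
      + (ss ⬝ᵥ yy)⁻¹ • vecMulVec yy yy)
    = det Bi * ((ss ⬝ᵥ yy) / (ss ⬝ᵥ Bi *ᵥ ss)) := by
  have hτ : 0 < ss ⬝ᵥ Bi *ᵥ ss := by
    have := hBi.dotProduct_mulVec_pos hss
    rwa [star_trivial] at this
  have hdu : IsUnit Bi.det := hBi.det_pos.ne'.isUnit
  set τ := ss ⬝ᵥ Bi *ᵥ ss with hτdef
  set σ := ss ⬝ᵥ yy with hσdef
  set Bs := Bi *ᵥ ss with hBsdef
  set z := Bi⁻¹ *ᵥ yy with hzdef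
  set U : Matrix (Fin d) (Fin 2) ℝ :=
    Matrix.of (fun i j => ![Bs i, yy i] j) with hUdef
  set V : Matrix (Fin d) (Fin 2) ℝ :=
    Matrix.of (fun i j => ![-τ⁻¹ * Bs i, σ⁻¹ * yy i] j) with hVdef
  have hW : Bi - τ⁻¹ • vecMulVec Bs Bs + σ⁻¹ • vecMulVec yy yy = Bi + U * Vᵀ := by
    ext i k
    simp only [Matrix.add_apply, Matrix.sub_apply, Matrix.smul_apply, Matrix.mul_apply,
      Fin.sum_univ_two, Matrix.transpose_apply, Matrix.of_apply, vecMulVec, smul_eq_mul,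
      hUdef, hVdef, Matrix.cons_val_zero, Matrix.cons_val_one, Matrix.head_cons]
    ring
  have hBs : Bi⁻¹ *ᵥ Bs = ss := by
    rw [hBsdef, Matrix.mulVec_mulVec, Matrix.nonsing_inv_mul _ hdu, Matrix.one_mulVec]
  have hzy : Bi *ᵥ z = yy := by
    rw [hzdef, Matrix.mulVec_mulVec, Matrix.mul_nonsing_inv _ hdu, Matrix.one_mulVec]
  have hU2 : Bi⁻¹ * U = Matrix.of (fun i j => ![ss i, z i] j) := by
    ext i j
    fin_cases j
    · calc (Bi⁻¹ * U) i 0 = (Bi⁻¹ *ᵥ Bs) i := by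
            simp [Matrix.mul_apply, Matrix.mulVec, dotProduct, hUdef]
        _ = ss i := by rw [hBs]
    · calc (Bi⁻¹ * U) i 1 = (Bi⁻¹ *ᵥ yy) i := by
            simp [Matrix.mul_apply, Matrix.mulVec, dotProduct, hUdef]
        _ = z i := rfl
  have hfact : Bi + U * Vᵀ = Bi * (1 + Bi⁻¹ * (U * Vᵀ)) := by
    rw [Matrix.mul_add, Matrix.mul_one, ← Matrix.mul_assoc,
      Matrix.mul_nonsing_inv _ hdu, Matrix.one_mul]
  have hBsss : Bs ⬝ᵥ ss = τ := by rw [hτdef, dotProduct_comm]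
  have hBsz : Bs ⬝ᵥ z = σ := by
    rw [hBsdef, dotProduct_comm, herm_dot_symm hBi.1 z ss, hzy]
  have hyss : yy ⬝ᵥ ss = σ := by rw [hσdef, dotProduct_comm]
  rw [hW, hfact, det_mul, ← Matrix.mul_assoc, Matrix.det_one_add_mul_comm, hU2]
  set X := Vᵀ * Matrix.of (fun (i : Fin d) (j : Fin 2) => ![ss i, z i] j) with hXdef
  have hτ0 : τ ≠ 0 := ne_of_gt hτ
  have hσ0 : σ ≠ 0 := ne_of_gt hσ
  have hsum : ∀ (c : ℝ) (a b : Fin d → ℝ), (∑ j, c * a j * b j) = c * (a ⬝ᵥ b) := by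
    intro c a b
    rw [dotProduct, Finset.mul_sum]
    exact Finset.sum_congr rfl fun j _ => by ring
  have Xval : ∀ p q : Fin 2,
      X p q = ∑ j, (![-τ⁻¹ * Bs j, σ⁻¹ * yy j] p) * (![ss j, z j] q) := by
    intro p q
    rw [hXdef, Matrix.mul_apply]
    refine Finset.sum_congr rfl fun j _ => ?_
    simp [hVdef]
  have X00 : X 0 0 = -τ⁻¹ * τ := by
    rw [Xval 0 0]
    simp only [Matrix.cons_val_zero]
    rw [hsum, hBsss]
  have X01 : X 0 1 = -τ⁻¹ * σ := by
    rw [Xval 0 1]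
    simp only [Matrix.cons_val_zero, Matrix.cons_val_one, Matrix.head_cons]
    rw [hsum, hBsz]
  have X10 : X 1 0 = σ⁻¹ * σ := by
    rw [Xval 1 0]
    simp only [Matrix.cons_val_zero, Matrix.cons_val_one, Matrix.head_cons]
    rw [hsum, hyss]
  have a00 : (1 + X) 0 0 = 0 := by
    rw [Matrix.add_apply, Matrix.one_apply_eq, X00]
    field_simp
    norm_num
  have a01 : (1 + X) 0 1 = -τ⁻¹ * σ := by
    rw [Matrix.add_apply, X01, Matrix.one_apply_ne (by decide), zero_add]
  have a10 : (1 + X) 1 0 = 1 := by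
    rw [Matrix.add_apply, X10, Matrix.one_apply_ne (by decide), zero_add]
    field_simp
  have hdet2 : det (1 + X) = σ / τ := by
    rw [Matrix.det_fin_two, a00, a01, a10]
    field_simp
    ring
  rw [hdet2]


lemma trace_eq_sum_eigenvalues {A : Matrix (Fin d) (Fin d) ℝ} (hA : A.IsHermitian) :
    trace A = ∑ i, hA.eigenvalues i := by
  simp [hA.trace_eq_sum_eigenvalues]


lemma cos_bound (hd : 0 < d) {A : Matrix (Fin d) (Fin d) ℝ} (hA : A.PosDef)
    (g : EuclideanSpace ℝ (Fin d)) (hg : g ≠ 0) :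
    Real.exp (-(trace A - Real.log (det A))) ≤
      (inner ℝ g (Matrix.toEuclideanLin A⁻¹ g) : ℝ) /
        (‖g‖ * ‖Matrix.toEuclideanLin A⁻¹ g‖) := by
  have hH : A.IsHermitian := hA.1
  set ν : Fin d → ℝ := hH.eigenvalues with hνdef
  have hν : ∀ i, 0 < ν i := hA.eigenvalues_pos
  set b := hH.eigenvectorBasis with hbdef
  have hdu : IsUnit A.det := hA.det_pos.ne'.isUnit
  set T := Matrix.toEuclideanLin A⁻¹ with hTdef
  have hAinv : (A⁻¹).IsHermitian := hH.inv
  have hsymmT : (Matrix.toEuclideanLin A⁻¹).IsSymmetric :=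
    Matrix.isHermitian_iff_isSymmetric.mp hAinv
  -- T on eigenvectors
  have hTv : ∀ j, T (b j) = (ν j)⁻¹ • b j := by
    intro j
    have h1 : A⁻¹ *ᵥ (A *ᵥ ⇑(b j)) = ⇑(b j) := by
      rw [Matrix.mulVec_mulVec, Matrix.nonsing_inv_mul _ hdu, Matrix.one_mulVec]
    rw [hH.mulVec_eigenvectorBasis, Matrix.mulVec_smul] at h1
    have h2 : A⁻¹ *ᵥ ⇑(b j) = (ν j)⁻¹ • ⇑(b j) := by
      have h3 := congrArg (fun w => (ν j)⁻¹ • w) h1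
      simp only [← hνdef, smul_smul, inv_mul_cancel₀ (hν j).ne', one_smul] at h3
      exact h3
    rw [hTdef, Matrix.toEuclideanLin_apply, h2]
    simp
  -- coefficients
  have key_repr : ∀ j, b.repr (T g) j = (ν j)⁻¹ * b.repr g j := by
    intro j
    rw [OrthonormalBasis.repr_apply_apply, ← hsymmT (b j) g, hTv j,
      real_inner_smul_left, ← OrthonormalBasis.repr_apply_apply]
  have hinner : ∀ u v : EuclideanSpace ℝ (Fin d),
      (inner ℝ u v : ℝ) = ∑ j, b.repr u j * b.repr v j := by
    intro u v
    rw [← b.repr.inner_map_map u v, PiLp.inner_apply]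
    simp [RCLike.inner_apply, conj_trivial, mul_comm]
  have hG2 : ‖g‖ ^ 2 = ∑ j, b.repr g j ^ 2 := by
    rw [← real_inner_self_eq_norm_sq, hinner]
    exact Finset.sum_congr rfl fun j _ => (sq (b.repr g j)).symm
  have hgn : 0 < ‖g‖ := norm_pos_iff.mpr hg
  obtain ⟨iM, _, hiM⟩ := Finset.exists_max_image Finset.univ ν ⟨⟨0, hd⟩, Finset.mem_univ _⟩
  obtain ⟨im, _, him⟩ := Finset.exists_min_image Finset.univ ν ⟨⟨0, hd⟩, Finset.mem_univ _⟩
  have hinn_eq : (inner ℝ g (T g) : ℝ) = ∑ j, (ν j)⁻¹ * b.repr g j ^ 2 := by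
    rw [hinner]
    exact Finset.sum_congr rfl fun j _ => by rw [key_repr j]; ring
  have hinnlow : (ν iM)⁻¹ * ‖g‖ ^ 2 ≤ (inner ℝ g (T g) : ℝ) := by
    rw [hinn_eq, hG2, Finset.mul_sum]
    refine Finset.sum_le_sum fun j _ => ?_
    have : (ν iM)⁻¹ ≤ (ν j)⁻¹ := inv_anti₀ (hν j) (hiM j (Finset.mem_univ _))
    exact mul_le_mul_of_nonneg_right this (sq_nonneg _)
  have hTg2 : ‖T g‖ ^ 2 = ∑ j, ((ν j)⁻¹ * b.repr g j) ^ 2 := by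
    rw [← real_inner_self_eq_norm_sq, hinner]
    exact Finset.sum_congr rfl fun j _ => by rw [key_repr j]; ring
  have hTgle : ‖T g‖ ≤ (ν im)⁻¹ * ‖g‖ := by
    have h1 : ‖T g‖ ^ 2 ≤ ((ν im)⁻¹ * ‖g‖) ^ 2 := by
      rw [hTg2, mul_pow, hG2, Finset.mul_sum]
      refine Finset.sum_le_sum fun j _ => ?_
      have h2 : (ν j)⁻¹ ≤ (ν im)⁻¹ := inv_anti₀ (hν im) (him j (Finset.mem_univ _))
      have h3 : (0:ℝ) ≤ (ν j)⁻¹ := (inv_pos.mpr (hν j)).le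
      calc ((ν j)⁻¹ * b.repr g j) ^ 2 = (ν j)⁻¹ ^ 2 * b.repr g j ^ 2 := by ring
        _ ≤ (ν im)⁻¹ ^ 2 * b.repr g j ^ 2 := by
            apply mul_le_mul_of_nonneg_right _ (sq_nonneg _)
            exact pow_le_pow_left₀ h3 h2 2
    have h4 := Real.sqrt_le_sqrt h1
    rwa [Real.sqrt_sq (norm_nonneg _),
      Real.sqrt_sq (mul_nonneg (inv_pos.mpr (hν im)).le (norm_nonneg _))] at h4
  have hinnpos : 0 < (inner ℝ g (T g) : ℝ) :=
    lt_of_lt_of_le (mul_pos (inv_pos.mpr (hν iM)) (by positivity)) hinnlow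
  have hTgpos : 0 < ‖T g‖ := by
    rcases eq_or_ne (T g) 0 with h | h
    · rw [h] at hinnpos
      simp [inner_zero_right] at hinnpos
    · exact norm_pos_iff.mpr h
  -- ratio bound
  have hratio : ν im / ν iM ≤ (inner ℝ g (T g) : ℝ) / (‖g‖ * ‖T g‖) := by
    have hstep : ((ν iM)⁻¹ * ‖g‖ ^ 2) / (‖g‖ * ((ν im)⁻¹ * ‖g‖)) ≤
        (inner ℝ g (T g) : ℝ) / (‖g‖ * ‖T g‖) := by
      apply div_le_div₀ hinnpos.le hinnlow (mul_pos hgn hTgpos)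
      exact mul_le_mul_of_nonneg_left hTgle hgn.le
    have heq : ((ν iM)⁻¹ * ‖g‖ ^ 2) / (‖g‖ * ((ν im)⁻¹ * ‖g‖)) = ν im / ν iM := by
      field_simp [hgn.ne', (hν im).ne', (hν iM).ne']
    rwa [heq] at hstep
  -- spectral bound
  have hψ : Real.log (ν iM) - Real.log (ν im) ≤ trace A - Real.log (det A) := by
    have htr : trace A = ∑ j, ν j := trace_eq_sum_eigenvalues hH
    have hdet : Real.log (det A) = ∑ j, Real.log (ν j) := by
      have : det A = ∏ j, ν j := by
        rw [hH.det_eq_prod_eigenvalues]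
        norm_num
        rfl
      rw [this, Real.log_prod fun j _ => (hν j).ne']
    rw [htr, hdet, ← Finset.sum_sub_distrib]
    have hterm : ∀ j, 0 ≤ ν j - Real.log (ν j) := by
      intro j
      have := Real.log_le_sub_one_of_pos (hν j)
      linarith
    rcases eq_or_ne iM im with h | h
    · rw [h, sub_self]
      exact Finset.sum_nonneg fun j _ => hterm j
    · have hsub : ({iM, im} : Finset (Fin d)) ⊆ Finset.univ := Finset.subset_univ _
      have hpair : ∑ j ∈ ({iM, im} : Finset (Fin d)), (ν j - Real.log (ν j))
          ≤ ∑ j, (ν j - Real.log (ν j)) :=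
        Finset.sum_le_sum_of_subset_of_nonneg hsub fun j _ _ => hterm j
      rw [Finset.sum_pair h] at hpair
      have hlM := log_le_half (ν iM) (hν iM)
      have hmpos := hν im
      have hlm := Real.log_le_sub_one_of_pos (hν im)
      linarith
  calc Real.exp (-(trace A - Real.log (det A)))
      ≤ Real.exp (Real.log (ν im) - Real.log (ν iM)) := by
        apply Real.exp_le_exp.mpr
        linarith
    _ = ν im / ν iM := by
        rw [Real.exp_sub, Real.exp_log (hν im), Real.exp_log (hν iM)]
    _ ≤ _ := hratio


lemma dot_self_pos {x : Fin d → ℝ} (hx : x ≠ 0) : 0 < x ⬝ᵥ x := by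
  have h0 : 0 ≤ x ⬝ᵥ x := Finset.sum_nonneg fun i _ => mul_self_nonneg _
  rcases h0.lt_or_eq with h | h
  · exact h
  · exact absurd (dotProduct_self_eq_zero.mp h.symm) hx

end


/-- Lemma 3.2, L-BFGS case: with `H = B_t⁻¹` the L-BFGS inverse Hessian approximation
built from `t` BFGS updates of `B₀ = δ I` with curvature pairs obeying the bounds
`m̂`, `M̂`, the cosine of the angle between `H g` and `g` is at least
`exp(−(d + t)(M̂ − log m̂))` for every nonzero `g`. -/
theorem lbfgs_good_iterates
    {d : ℕ} (hd : 0 < d) (t : ℕ)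
    (mhat Mhat δ : ℝ) (hm : 0 < mhat) (hmM : mhat ≤ Mhat)
    (hδl : mhat ≤ δ) (hδu : δ ≤ Mhat)
    (B : ℕ → Matrix (Fin d) (Fin d) ℝ)
    (hB0 : B 0 = δ • (1 : Matrix (Fin d) (Fin d) ℝ))
    (s y : ℕ → Fin d → ℝ)
    (hs : ∀ i < t, s i ≠ 0)
    (hsy : ∀ i < t, 0 < s i ⬝ᵥ y i)
    (hlow : ∀ i < t, s i ⬝ᵥ y i / (s i ⬝ᵥ s i) ≥ mhat)
    (hup : ∀ i < t, y i ⬝ᵥ y i / (s i ⬝ᵥ y i) ≤ Mhat)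
    (hupd : ∀ i < t, B (i + 1) =
      B i - (s i ⬝ᵥ (B i).mulVec (s i))⁻¹ •
          vecMulVec ((B i).mulVec (s i)) ((B i).mulVec (s i)) +
        (s i ⬝ᵥ y i)⁻¹ • vecMulVec (y i) (y i))
    (H : EuclideanSpace ℝ (Fin d) →ₗ[ℝ] EuclideanSpace ℝ (Fin d))
    (hH : H = Matrix.toEuclideanLin (B t)⁻¹) :
    ∀ g : EuclideanSpace ℝ (Fin d), g ≠ 0 →
      (inner ℝ g (H g) : ℝ) / (‖g‖ * ‖H g‖) ≥
        Real.exp (-((d : ℝ) + t) * (Mhat - Real.log mhat)) := by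
  intro g hg
  have hδpos : 0 < δ := lt_of_lt_of_le hm hδl
  set K := Mhat - Real.log mhat with hKdef
  have main : ∀ i, i ≤ t → (B i).PosDef ∧
      trace (B i) - Real.log (det (B i)) ≤ ((d : ℝ) + i) * K := by
    intro i
    induction i with
    | zero =>
      intro _
      constructor
      · rw [hB0]
        refine Matrix.PosDef.of_dotProduct_mulVec_pos (isHermitian_smul_real Matrix.isHermitian_one δ) fun x hx => ?_
        rw [star_trivial, Matrix.smul_mulVec, Matrix.one_mulVec,
          dotProduct_smul, smul_eq_mul]
        exact mul_pos hδpos (dot_self_pos hx)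
      · rw [hB0, Matrix.trace_smul, Matrix.trace_one, Matrix.det_smul, Matrix.det_one,
          mul_one, Real.log_pow, smul_eq_mul, Fintype.card_fin]
        have hlog : Real.log mhat ≤ Real.log δ := (Real.log_le_log_iff hm hδpos).mpr hδl
        have hd0 : (0:ℝ) ≤ (d : ℝ) := Nat.cast_nonneg d
        push_cast
        nlinarith [hδu]
    | succ i ih =>
      intro hit
      have hi : i < t := Nat.lt_of_succ_le hit
      obtain ⟨hPD, hψ⟩ := ih (Nat.le_of_succ_le hit)
      set ss := s i with hssdef
      set yy := y i with hyydef
      have hPD' : (B (i+1)).PosDef := by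
        rw [hupd i hi]
        exact posDef_update hPD (hs i hi) (hsy i hi)
      refine ⟨hPD', ?_⟩
      have hτ : 0 < ss ⬝ᵥ (B i) *ᵥ ss := by
        have := hPD.dotProduct_mulVec_pos (hs i hi)
        rwa [star_trivial] at this
      have hσ : 0 < ss ⬝ᵥ yy := hsy i hi
      set τ := ss ⬝ᵥ (B i) *ᵥ ss with hτdef
      set σ := ss ⬝ᵥ yy with hσdef
      set Bs := (B i) *ᵥ ss with hBsdef
      have hssp : 0 < ss ⬝ᵥ ss := dot_self_pos (hs i hi)
      have hcs : (ss ⬝ᵥ Bs) ^ 2 ≤ (ss ⬝ᵥ ss) * (Bs ⬝ᵥ Bs) := dot_cs ss Bs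
      have hssBs : ss ⬝ᵥ Bs = τ := rfl
      rw [hssBs] at hcs
      have hBs2 : 0 < Bs ⬝ᵥ Bs := by nlinarith
      set p := (Bs ⬝ᵥ Bs) / τ with hpdef
      have hppos : 0 < p := div_pos hBs2 hτ
      have h1 : τ / (ss ⬝ᵥ ss) ≤ p := by
        rw [hpdef, div_le_div_iff₀ hssp hτ]
        nlinarith
      have h2 : Real.log τ ≤ Real.log p + Real.log (ss ⬝ᵥ ss) := by
        have ht1 : τ = τ / (ss ⬝ᵥ ss) * (ss ⬝ᵥ ss) := by field_simp
        rw [ht1, Real.log_mul (by positivity) hssp.ne']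
        have := (Real.log_le_log_iff (div_pos hτ hssp) hppos).mpr h1
        linarith
      have h3 : Real.log p ≤ p - 1 := Real.log_le_sub_one_of_pos hppos
      have h4 : σ⁻¹ * (yy ⬝ᵥ yy) ≤ Mhat := by
        have := hup i hi
        rwa [div_eq_inv_mul] at this
      have h5 : Real.log mhat + Real.log (ss ⬝ᵥ ss) ≤ Real.log σ := by
        have hge : mhat * (ss ⬝ᵥ ss) ≤ σ := by
          have := hlow i hi
          rw [ge_iff_le, le_div_iff₀ hssp] at this
          linarith
        have := (Real.log_le_log_iff (mul_pos hm hssp) hσ).mpr hge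
        rwa [Real.log_mul hm.ne' hssp.ne'] at this
      have hdetpos : 0 < det (B i) := hPD.det_pos
      rw [hupd i hi, trace_update, det_update hPD (hs i hi) hσ]
      rw [Real.log_mul hdetpos.ne' (by positivity),
        Real.log_div hσ.ne' hτ.ne']
      have h6 : τ⁻¹ * (Bs ⬝ᵥ Bs) = p := by rw [hpdef]; field_simp
      rw [← hτdef, ← hσdef, ← hBsdef, h6]
      push_cast
      nlinarith [hψ]
  obtain ⟨hPD, hψ⟩ := main t le_rfl
  rw [hH, ge_iff_le]
  have hcos := cos_bound hd hPD g hg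
  refine le_trans ?_ hcos
  apply Real.exp_le_exp.mpr
  have : ((d : ℝ) + t) * K = ((d : ℝ) + t) * K := rfl
  nlinarith [hψ]
end
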